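/- arXiv:2510.14033 — 4 statements merged into one kernel-verified Lean document; each statement's English description precedes it below -/
import Mathlib

section
/- Let (a_j)_{j∈ℕ} be a sequence of elements of ℓ²(ℕ, ℂ) with components a_{kj}, satisfying Σ_{j=0}^∞ (j + 1)·‖a_j‖² < ∞, where ‖a_j‖² = Σ_k |a_{kj}|². Then the formula (A x)(k, p) = Σ_{q=0}^∞ a_{k, p+q} · x_q defines a continuous (bounded) linear operator A : ℓ²(ℕ, ℂ) → ℓ²(ℕ × ℕ, ℂ), and its operator norm satisfies ‖A‖² ≤ Σ_{j=0}^∞ (j + 1)·‖a_j‖². -/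
open scoped ENNReal ComplexConjugate

local notation "⟪" x ", " y "⟫" => @inner ℂ _ _ x y

lemma lp_norm_sq_eq {ι : Type*} (f : lp (fun _ : ι => ℂ) 2) :
    Summable (fun i => ‖f i‖ ^ 2) ∧ ∑' i, ‖f i‖ ^ 2 = ‖f‖ ^ 2 := by
  have hp : (0:ℝ) < (2:ℝ≥0∞).toReal := by norm_num
  have h1 := (lp.memℓp f).summable hp
  have h2 := lp.norm_rpow_eq_tsum hp f
  have he : ∀ x : ℝ, x ^ ((2:ℝ≥0∞).toReal) = x ^ 2 := by
    intro x
    rw [show ((2:ℝ≥0∞).toReal) = ((2:ℕ):ℝ) by norm_num, Real.rpow_natCast]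
  simp_rw [he] at h1 h2
  exact ⟨h1, h2.symm⟩

set_option maxHeartbeats 1000000 in
lemma hankel_sum (f : ℕ → ℝ) (hf0 : ∀ j, 0 ≤ f j) (hf : Summable fun j : ℕ => ((j:ℝ)+1) * f j) :
    Summable (fun pq : ℕ × ℕ => f (pq.1 + pq.2)) ∧
    ∑' pq : ℕ × ℕ, f (pq.1 + pq.2) = ∑' j : ℕ, ((j:ℝ)+1) * f j := by
  let E := Finset.HasAntidiagonal.sigmaAntidiagonalEquivProd (A := ℕ)
  have hval : ∀ s : (Σ n : ℕ, Finset.HasAntidiagonal.antidiagonal n), (E s).1 + (E s).2 = s.1 := by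
    rintro ⟨n, ⟨k, l⟩, h⟩
    exact Finset.HasAntidiagonal.mem_antidiagonal.mp h
  have hfib : ∀ j : ℕ, HasSum (fun i : Finset.HasAntidiagonal.antidiagonal j =>
      f ((E ⟨j, i⟩).1 + (E ⟨j, i⟩).2)) (((j:ℝ)+1) * f j) := by
    intro j
    have h1 : ∀ i : Finset.HasAntidiagonal.antidiagonal j, f ((E ⟨j, i⟩).1 + (E ⟨j, i⟩).2) = f j := by
      intro i; rw [hval ⟨j, i⟩]
    simp_rw [h1]
    have := hasSum_fintype (fun _ : Finset.HasAntidiagonal.antidiagonal j => f j)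
    simpa [Finset.sum_const, nsmul_eq_mul, Fintype.card_coe, Finset.Nat.card_antidiagonal,
      mul_comm] using this
  have hsig : Summable (fun s : (Σ n : ℕ, Finset.HasAntidiagonal.antidiagonal n) =>
      f ((E s).1 + (E s).2)) := by
    rw [summable_sigma_of_nonneg]
    · refine ⟨fun j => (hfib j).summable, ?_⟩
      · have : ∀ j : ℕ, ∑' i : Finset.HasAntidiagonal.antidiagonal j, f ((E ⟨j, i⟩).1 + (E ⟨j, i⟩).2)
            = ((j:ℝ)+1) * f j := fun j => (hfib j).tsum_eq
        simpa only [this] using hf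
    · exact fun s => hf0 _
  have hsum : Summable (fun pq : ℕ × ℕ => f (pq.1 + pq.2)) := E.summable_iff.mp hsig
  refine ⟨hsum, ?_⟩
  have h2 : ∑' s : (Σ n : ℕ, Finset.HasAntidiagonal.antidiagonal n), f ((E s).1 + (E s).2)
      = ∑' pq : ℕ × ℕ, f (pq.1 + pq.2) := E.tsum_eq (fun pq => f (pq.1 + pq.2))
  rw [← h2, Summable.tsum_sigma' (fun j => (hfib j).summable) hsig]
  exact tsum_congr fun j => (hfib j).tsum_eq

/-- If `Σ_j (j+1)‖a_j‖² < ∞` then the block Hankel matrix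
`(A x)(k, p) = Σ_q a_{k, p+q} x_q` defines a bounded linear operator
`A : ℓ²(ℕ, ℂ) → ℓ²(ℕ × ℕ, ℂ)` with `‖A‖² ≤ Σ_j (j+1)‖a_j‖²`. -/
theorem stmt_4 (a : ℕ → lp (fun _ : ℕ => ℂ) 2)
    (ha : Summable fun j : ℕ => ((j : ℝ) + 1) * ‖a j‖ ^ 2) :
    ∃ A : lp (fun _ : ℕ => ℂ) 2 →L[ℂ] lp (fun _ : ℕ × ℕ => ℂ) 2,
      (∀ (x : lp (fun _ : ℕ => ℂ) 2) (k p : ℕ),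
        A x (k, p) = ∑' q : ℕ, a (p + q) k * x q) ∧
      ‖A‖ ^ 2 ≤ ∑' j : ℕ, ((j : ℝ) + 1) * ‖a j‖ ^ 2 := by
  classical
  set S := ∑' j : ℕ, ((j : ℝ) + 1) * ‖a j‖ ^ 2 with hSdef
  have hS0 : 0 ≤ S := tsum_nonneg fun j =>
    mul_nonneg (by positivity) (sq_nonneg _)
  obtain ⟨hu, huS⟩ := hankel_sum (fun j => ‖a j‖ ^ 2) (fun j => sq_nonneg _) ha
  -- summability over ((p,q),k)
  have hT'' : Summable (fun x : (ℕ × ℕ) × ℕ => ‖a (x.1.1 + x.1.2) x.2‖ ^ 2) := by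
    rw [summable_prod_of_nonneg (fun _ => sq_nonneg _)]
    refine ⟨fun pq => (lp_norm_sq_eq (a (pq.1 + pq.2))).1, ?_⟩
    have : (fun pq : ℕ × ℕ => ∑' k, ‖a (pq.1 + pq.2) k‖ ^ 2)
        = fun pq : ℕ × ℕ => ‖a (pq.1 + pq.2)‖ ^ 2 :=
      funext fun pq => (lp_norm_sq_eq (a (pq.1 + pq.2))).2
    rw [this]; exact hu
  have hT''sum : ∑' x : (ℕ × ℕ) × ℕ, ‖a (x.1.1 + x.1.2) x.2‖ ^ 2 = S := by
    rw [Summable.tsum_prod' hT'' (fun pq => (lp_norm_sq_eq (a (pq.1 + pq.2))).1)]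
    rw [tsum_congr (fun pq : ℕ × ℕ => (lp_norm_sq_eq (a (pq.1 + pq.2))).2)]
    exact huS
  -- transfer to ((k,p),q)
  let φ : ((ℕ × ℕ) × ℕ) ≃ ((ℕ × ℕ) × ℕ) :=
  { toFun := fun x => ((x.1.2, x.2), x.1.1)
    invFun := fun y => ((y.2, y.1.1), y.1.2)
    left_inv := fun _ => rfl
    right_inv := fun _ => rfl }
  have hT : Summable (fun x : (ℕ × ℕ) × ℕ => ‖a (x.1.2 + x.2) x.1.1‖ ^ 2) :=
    (φ.summable_iff (f := fun x : (ℕ × ℕ) × ℕ => ‖a (x.1.1 + x.1.2) x.2‖ ^ 2)).mpr hT''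
  have hTsum : ∑' x : (ℕ × ℕ) × ℕ, ‖a (x.1.2 + x.2) x.1.1‖ ^ 2 = S := by
    have h := φ.tsum_eq (fun x : (ℕ × ℕ) × ℕ => ‖a (x.1.1 + x.1.2) x.2‖ ^ 2)
    exact h.trans hT''sum
  obtain ⟨hrows, hg⟩ := (summable_prod_of_nonneg (f := fun x : (ℕ × ℕ) × ℕ =>
    ‖a (x.1.2 + x.2) x.1.1‖ ^ 2) (fun _ => sq_nonneg _)).mp hT
  set g : ℕ × ℕ → ℝ := fun i => ∑' q, ‖a (i.2 + q) i.1‖ ^ 2 with hgdef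
  have hgS : ∑' i, g i = S := by
    rw [← hTsum, Summable.tsum_prod' hT hrows]
  -- rows as lp elements
  have hpow : ∀ x : ℝ, x ^ ((2:ℝ≥0∞).toReal) = x ^ 2 := by
    intro x
    rw [show ((2:ℝ≥0∞).toReal) = ((2:ℕ):ℝ) by norm_num, Real.rpow_natCast]
  have hrowmem : ∀ i : ℕ × ℕ, Memℓp (fun q => conj (a (i.2 + q) i.1)) (2:ℝ≥0∞) := by
    intro i
    apply memℓp_gen
    simp_rw [hpow, RCLike.norm_conj]
    exact hrows i
  let row : ℕ × ℕ → lp (fun _ : ℕ => ℂ) 2 := fun i => ⟨_, hrowmem i⟩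
  have hrownorm : ∀ i, ‖row i‖ ^ 2 = g i := by
    intro i
    obtain ⟨h1, h2⟩ := lp_norm_sq_eq (row i)
    rw [← h2]
    exact tsum_congr fun q => by simp [row, RCLike.norm_conj]
  -- membership of the image
  have hAxbd : ∀ (x : lp (fun _ : ℕ => ℂ) 2) (i : ℕ × ℕ),
      ‖(⟪row i, x⟫ : ℂ)‖ ^ 2 ≤ g i * ‖x‖ ^ 2 := by
    intro x i
    have h1 : ‖(⟪row i, x⟫ : ℂ)‖ ≤ ‖row i‖ * ‖x‖ := norm_inner_le_norm _ _
    calc ‖(⟪row i, x⟫ : ℂ)‖ ^ 2 ≤ (‖row i‖ * ‖x‖) ^ 2 := by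
          exact pow_le_pow_left₀ (norm_nonneg _) h1 2
      _ = g i * ‖x‖ ^ 2 := by rw [mul_pow, hrownorm]
  have hAxsummable : ∀ x : lp (fun _ : ℕ => ℂ) 2,
      Summable (fun i : ℕ × ℕ => ‖(⟪row i, x⟫ : ℂ)‖ ^ 2) := by
    intro x
    exact Summable.of_nonneg_of_le (fun i => sq_nonneg _) (fun i => hAxbd x i)
      (hg.mul_right (‖x‖ ^ 2))
  have hAxmem : ∀ x : lp (fun _ : ℕ => ℂ) 2,
      Memℓp (fun i : ℕ × ℕ => (⟪row i, x⟫ : ℂ)) (2:ℝ≥0∞) := by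
    intro x
    apply memℓp_gen
    simp_rw [hpow]
    exact hAxsummable x
  let L : lp (fun _ : ℕ => ℂ) 2 →ₗ[ℂ] lp (fun _ : ℕ × ℕ => ℂ) 2 :=
  { toFun := fun x => ⟨fun i => (⟪row i, x⟫ : ℂ), hAxmem x⟩
    map_add' := fun x y => by
      ext i
      simp [lp.coeFn_add, inner_add_right]
      rfl
    map_smul' := fun c x => by
      ext i
      simp [lp.coeFn_smul, inner_smul_right] }
  have hLnormsq : ∀ x, ‖L x‖ ^ 2 ≤ S * ‖x‖ ^ 2 := by
    intro x
    obtain ⟨h1, h2⟩ := lp_norm_sq_eq (L x)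
    rw [← h2]
    calc (∑' i, ‖(L x) i‖ ^ 2) ≤ ∑' i, g i * ‖x‖ ^ 2 := by
          refine Summable.tsum_le_tsum (fun i => hAxbd x i) ?_ (hg.mul_right _)
          exact hAxsummable x
      _ = (∑' i, g i) * ‖x‖ ^ 2 := by rw [tsum_mul_right]
      _ = S * ‖x‖ ^ 2 := by rw [hgS]
  have hLbound : ∀ x, ‖L x‖ ≤ Real.sqrt S * ‖x‖ := by
    intro x
    have h0 : 0 ≤ Real.sqrt S * ‖x‖ := mul_nonneg (Real.sqrt_nonneg _) (norm_nonneg _)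
    have := hLnormsq x
    nlinarith [norm_nonneg (L x), Real.sq_sqrt hS0, Real.sqrt_nonneg S]
  refine ⟨L.mkContinuous (Real.sqrt S) hLbound, ?_, ?_⟩
  · intro x k p
    show (⟪row (k, p), x⟫ : ℂ) = ∑' q : ℕ, a (p + q) k * x q
    rw [lp.inner_eq_tsum]
    exact tsum_congr fun q => by
      simp [row, RCLike.inner_apply, RingHom.id_apply, mul_comm]
  · have hA : ‖L.mkContinuous (Real.sqrt S) hLbound‖ ≤ Real.sqrt S :=
      L.mkContinuous_norm_le (Real.sqrt_nonneg S) hLbound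
    calc ‖L.mkContinuous (Real.sqrt S) hLbound‖ ^ 2 ≤ Real.sqrt S ^ 2 :=
          pow_le_pow_left₀ (norm_nonneg _) hA 2
      _ = S := Real.sq_sqrt hS0
end

section
/- Let (a_j)_{j∈ℕ} be a sequence of elements of ℓ²(ℕ, ℂ) with components a_{kj}, satisfying Σ_{j=0}^∞ (j + 1)·‖a_j‖² < ∞, and let A : ℓ²(ℕ, ℂ) → ℓ²(ℕ × ℕ, ℂ) be the bounded block Hankel operator (A x)(k, p) = Σ_q a_{k, p+q}·x_q. Then the operator Q := A A* on ℓ²(ℕ × ℕ, ℂ) is self-adjoint, compact, and positive (nonnegative), and its matrix entries are given for all k, n ≥ 1 and p, q ≥ 0 by ⟨Q e_{(n,q)}, e_{(k,p)}⟩ = Q_{kn}(p, q) = Σ_{s=0}^∞ a_{k, s+p} · conj(a_{n, s+q}), where the series converges absolutely. -/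
open scoped ComplexConjugate ENNReal
open Filter

noncomputable section
namespace Stmt6


/-- ℓ² norm-square identity in `ENNReal.ofReal` form, plus summability. -/
lemma lp_sq {ι : Type*} (f : lp (fun _ : ι => ℂ) 2) :
    Summable (fun i => ‖f i‖ ^ 2) ∧
      ENNReal.ofReal (‖f‖ ^ 2) = ∑' i, ENNReal.ofReal (‖f i‖ ^ 2) := by
  have hp : 0 < (2 : ℝ≥0∞).toReal := by norm_num
  have hs := (lp.memℓp f).summable hp
  have h2 : ∀ x : ℝ, x ^ (2 : ℝ≥0∞).toReal = x ^ 2 := by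
    intro x
    rw [show (2 : ℝ≥0∞).toReal = ((2 : ℕ) : ℝ) by norm_num, Real.rpow_natCast]
  have hs' : Summable (fun i => ‖f i‖ ^ 2) := by simpa [h2] using hs
  refine ⟨hs', ?_⟩
  have := lp.norm_rpow_eq_tsum hp f
  simp only [h2] at this
  rw [this, ENNReal.ofReal_tsum_of_nonneg (fun i => by positivity) hs']


lemma mul_summable {u v : ℕ → ℂ} (hu : Summable fun s => ‖u s‖ ^ 2)
    (hv : Summable fun s => ‖v s‖ ^ 2) : Summable fun s => ‖u s * v s‖ := by
  refine Summable.of_nonneg_of_le (fun s => norm_nonneg _) (fun s => ?_)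
    ((hu.add hv).div_const 2)
  rw [norm_mul]
  nlinarith [sq_nonneg (‖u s‖ - ‖v s‖), norm_nonneg (u s), norm_nonneg (v s)]

lemma tsum_antidiag (g : ℕ → ℝ≥0∞) :
    ∑' pq : ℕ × ℕ, g (pq.1 + pq.2) = ∑' m : ℕ, ((m : ℝ≥0∞) + 1) * g m := by
  rw [← Finset.HasAntidiagonal.sigmaAntidiagonalEquivProd.tsum_eq (fun pq : ℕ × ℕ => g (pq.1 + pq.2))]
  rw [ENNReal.tsum_sigma']
  congr 1
  ext n
  have h1 : ∀ x : (Finset.HasAntidiagonal.antidiagonal n : Finset (ℕ × ℕ)),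
      g ((x : ℕ × ℕ).1 + (x : ℕ × ℕ).2) = g n := by
    rintro ⟨x, hx⟩
    rw [Finset.HasAntidiagonal.mem_antidiagonal] at hx
    simp [hx]
  calc (∑' x : (Finset.HasAntidiagonal.antidiagonal n : Finset (ℕ × ℕ)),
        g ((Finset.HasAntidiagonal.sigmaAntidiagonalEquivProd ⟨n, x⟩).1 +
           (Finset.HasAntidiagonal.sigmaAntidiagonalEquivProd ⟨n, x⟩).2))
      = ∑' _x : (Finset.HasAntidiagonal.antidiagonal n : Finset (ℕ × ℕ)), g n := by
        apply tsum_congr; intro x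
        simpa using h1 x
    _ = ((n : ℝ≥0∞) + 1) * g n := by
        rw [Finset.tsum_subtype (Finset.HasAntidiagonal.antidiagonal n) (fun _ => g n),
          Finset.sum_const, Finset.Nat.card_antidiagonal, nsmul_eq_mul]
        push_cast
        ring


abbrev H := lp (fun _ : ℕ => ℂ) 2
abbrev H2 := lp (fun _ : ℕ × ℕ => ℂ) 2

/-- Coordinate evaluation as a continuous linear map on ℓ². -/
def evalCLM (q : ℕ) : H →L[ℂ] ℂ :=
  LinearMap.mkContinuous
    { toFun := fun x => x q
      map_add' := fun f g => by
        have := lp.coeFn_add f g; exact congrFun this q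
      map_smul' := fun c f => by
        have := lp.coeFn_smul c f; exact congrFun this q } 1
    (fun x => by simpa using lp.norm_apply_le_norm two_ne_zero x q)

@[simp] lemma evalCLM_apply (q : ℕ) (x : H) : evalCLM q x = x q := rfl

/-- Any continuous linear map from a finite-dimensional space is compact. -/
lemma isCompact_toSpanSingleton (v : H) :
    IsCompactOperator (ContinuousLinearMap.toSpanSingleton ℂ v) := by
  refine ⟨(ContinuousLinearMap.toSpanSingleton ℂ v) '' Metric.closedBall 0 1, ?_, ?_⟩
  · exact (isCompact_closedBall 0 1).image (ContinuousLinearMap.toSpanSingleton ℂ v).continuous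
  · exact Filter.mem_of_superset (Metric.closedBall_mem_nhds 0 one_pos)
      (Set.subset_preimage_image _ _)

/-- The rank-one operator `x ↦ x q • e_q`. -/
def rankOne (q : ℕ) : H →L[ℂ] H :=
  (ContinuousLinearMap.toSpanSingleton ℂ (lp.single 2 q 1)).comp (evalCLM q)

lemma isCompact_rankOne (q : ℕ) : IsCompactOperator (rankOne q) :=
  (isCompact_toSpanSingleton _).comp_clm (evalCLM q)

def P (N : ℕ) : H →L[ℂ] H := ∑ q ∈ Finset.range N, rankOne q

lemma isCompact_P (N : ℕ) : IsCompactOperator (P N) := by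
  classical
  unfold P
  induction N with
  | zero => simpa using isCompactOperator_zero
  | succ n ih =>
      rw [Finset.sum_range_succ, show ⇑((∑ q ∈ Finset.range n, rankOne q) + rankOne n)
        = ⇑(∑ q ∈ Finset.range n, rankOne q) + ⇑(rankOne n) from rfl]
      exact ih.add (isCompact_rankOne n)

lemma P_apply (N : ℕ) (x : H) (q' : ℕ) :
    (P N x) q' = if q' < N then x q' else 0 := by
  classical
  have : (P N x : ℕ → ℂ) q' = ∑ q ∈ Finset.range N, (rankOne q x : ℕ → ℂ) q' := by
    unfold P
    rw [ContinuousLinearMap.sum_apply]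
    rw [congrFun (lp.coeFn_sum (fun q => rankOne q x) (Finset.range N)) q',
      Finset.sum_apply]
  rw [this]
  have h1 : ∀ q, (rankOne q x : ℕ → ℂ) q' = if q' = q then x q else 0 := by
    intro q
    have h2 : rankOne q x = x q • lp.single 2 q (1:ℂ) := by
      simp [rankOne, ContinuousLinearMap.toSpanSingleton_apply]
    rw [h2]
    have h3 := congrFun (lp.coeFn_smul (E := fun _ : ℕ => ℂ) (p := 2) (x q)
      (lp.single 2 q (1:ℂ))) q'
    rw [h3]
    simp only [Pi.smul_apply, lp.single_apply, smul_eq_mul]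
    split_ifs with h <;> simp [h, Pi.single_apply]
  simp only [h1]
  rw [Finset.sum_ite_eq (Finset.range N) q' (fun q => x q)]
  simp [Finset.mem_range]


section withA
variable (a : ℕ → lp (fun _ : ℕ => ℂ) 2)
  (ha : Summable fun j : ℕ => ((j : ℝ) + 1) * ‖a j‖ ^ 2)
  (A : lp (fun _ : ℕ => ℂ) 2 →L[ℂ] lp (fun _ : ℕ × ℕ => ℂ) 2)
  (hA : ∀ (x : lp (fun _ : ℕ => ℂ) 2) (k p : ℕ),
      A x (k, p) = ∑' q : ℕ, a (p + q) k * x q)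

include ha in
lemma hsq : Summable fun j : ℕ => ‖a j‖ ^ 2 := by
  refine Summable.of_nonneg_of_le (fun j => by positivity) (fun j => ?_) ha
  have : (1 : ℝ) ≤ (j : ℝ) + 1 := le_add_of_nonneg_left (Nat.cast_nonneg j)
  nlinarith [sq_nonneg ‖a j‖]

include ha in
lemma hsqk (k : ℕ) : Summable fun j : ℕ => ‖a j k‖ ^ 2 := by
  refine Summable.of_nonneg_of_le (fun j => by positivity) (fun j => ?_) (hsq a ha)
  have h := lp.norm_apply_le_norm (by norm_num : (2:ℝ≥0∞) ≠ 0) (a j) k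
  nlinarith [norm_nonneg (a j k), norm_nonneg (a j)]

include ha in
lemma hsqk_shift (k m : ℕ) : Summable fun s : ℕ => ‖a (s + m) k‖ ^ 2 :=
  (summable_nat_add_iff (f := fun j : ℕ => ‖a j k‖ ^ 2) m).2 (hsqk a ha k)

include ha in
lemma habs (k n p q : ℕ) :
    Summable fun s : ℕ => ‖a (s + p) k * conj (a (s + q) n)‖ := by
  have h2 : Summable fun s : ℕ => ‖conj (a (s + q) n)‖ ^ 2 := by
    simpa using hsqk_shift a ha n q
  exact mul_summable (hsqk_shift a ha k p) h2

include hA in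
lemma adjoint_coord (n q s : ℕ) :
    (ContinuousLinearMap.adjoint A (lp.single 2 (n, q) (1:ℂ))) s
      = conj (a (q + s) n) := by
  classical
  have h0 : ∀ (f : H) (s : ℕ), f s = @inner ℂ _ _ (lp.single 2 s (1:ℂ)) f := by
    intro f s
    rw [lp.inner_single_left]
    simp [RCLike.inner_apply]
  rw [h0]
  rw [ContinuousLinearMap.adjoint_inner_right]
  rw [lp.inner_single_right]
  have hval : A (lp.single 2 s (1:ℂ)) (n, q) = a (q + s) n := by
    rw [hA]
    rw [tsum_eq_single s]
    · have : (lp.single 2 s (1:ℂ) : ℕ → ℂ) s = 1 := by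
        rw [lp.single_apply]; simp
      rw [this, mul_one]
    · intro q' hq'
      have : (lp.single 2 s (1:ℂ) : ℕ → ℂ) q' = 0 := by
        rw [lp.single_apply]; simp [hq']
      rw [this, mul_zero]
  rw [hval]
  simp [RCLike.inner_apply]

end withA
end Stmt6

namespace Stmt6
section withA
variable (a : ℕ → lp (fun _ : ℕ => ℂ) 2)
  (ha : Summable fun j : ℕ => ((j : ℝ) + 1) * ‖a j‖ ^ 2)
  (A : lp (fun _ : ℕ => ℂ) 2 →L[ℂ] lp (fun _ : ℕ × ℕ => ℂ) 2)
  (hA : ∀ (x : lp (fun _ : ℕ => ℂ) 2) (k p : ℕ),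
      A x (k, p) = ∑' q : ℕ, a (p + q) k * x q)

lemma memℓp_two_of {u : ℕ → ℂ} (h : Summable fun q => ‖u q‖ ^ 2) :
    Memℓp u 2 := by
  apply memℓp_gen
  have h2 : ∀ x : ℝ, x ^ (2 : ℝ≥0∞).toReal = x ^ 2 := by
    intro x
    rw [show (2 : ℝ≥0∞).toReal = ((2 : ℕ) : ℝ) by norm_num, Real.rpow_natCast]
  simpa [h2] using h

include ha in
lemma summable_entry (x : H) (k p : ℕ) :
    Summable fun q : ℕ => ‖a (p + q) k * x q‖ := by
  have h1 : Summable fun q : ℕ => ‖a (p + q) k‖ ^ 2 := by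
    refine (summable_congr fun q => by rw [add_comm p q]).2 (hsqk_shift a ha k p)
  exact mul_summable h1 (lp_sq x).1

include ha hA in
lemma tail_coord (N : ℕ) (x : H) (k p : ℕ) :
    (A x - A (P N x)) (k, p) = ∑' q : ℕ, a (p + (q + N)) k * x (q + N) := by
  classical
  have hco := congrFun (lp.coeFn_sub (A x) (A (P N x))) (k, p)
  rw [hco, Pi.sub_apply, hA, hA]
  have hsum : Summable fun q : ℕ => a (p + q) k * x q :=
    (summable_entry a ha x k p).of_norm
  have htr : (∑' q : ℕ, a (p + q) k * (P N x) q)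
      = ∑ q ∈ Finset.range N, a (p + q) k * x q := by
    rw [tsum_eq_sum (s := Finset.range N) ?h]
    · exact Finset.sum_congr rfl fun q hq => by
        rw [P_apply, if_pos (Finset.mem_range.1 hq)]
    · intro q hq
      rw [P_apply, if_neg (fun h => hq (Finset.mem_range.2 h)), mul_zero]
  rw [htr, ← Summable.sum_add_tsum_nat_add N hsum]
  ring

include ha hA in
lemma pointwise_bound (N : ℕ) (x : H) (k p : ℕ) :
    ENNReal.ofReal (‖(A x - A (P N x)) (k, p)‖ ^ 2)
      ≤ (∑' q : ℕ, ENNReal.ofReal (‖a (p + q + N) k‖ ^ 2)) *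
          ENNReal.ofReal (‖x‖ ^ 2) := by
  classical
  have hfs : Summable fun q : ℕ => ‖conj (a (p + (q + N)) k)‖ ^ 2 := by
    have := (summable_nat_add_iff (f := fun j : ℕ => ‖a (p + j) k‖ ^ 2) N).2
      ((summable_congr fun q => by rw [add_comm p q]).2 (hsqk_shift a ha k p))
    simpa using this
  have hgs : Summable fun q : ℕ => ‖x (q + N)‖ ^ 2 :=
    (summable_nat_add_iff (f := fun q : ℕ => ‖x q‖ ^ 2) N).2 (lp_sq x).1
  set f : H := ⟨fun q => conj (a (p + (q + N)) k), memℓp_two_of hfs⟩ with hf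
  set g : H := ⟨fun q => x (q + N), memℓp_two_of hgs⟩ with hg
  have hfq : ∀ q, f q = conj (a (p + (q + N)) k) := fun q => rfl
  have hgq : ∀ q, g q = x (q + N) := fun q => rfl
  have hinner : (A x - A (P N x)) (k, p) = @inner ℂ _ _ f g := by
    rw [tail_coord a ha A hA N x k p, lp.inner_eq_tsum]
    exact tsum_congr fun q => by
      simp [hfq, hgq, RCLike.inner_apply, mul_comm]
  have hb : ‖(A x - A (P N x)) (k, p)‖ ≤ ‖f‖ * ‖g‖ := by
    rw [hinner]; exact norm_inner_le_norm f g
  have hb2 : ‖(A x - A (P N x)) (k, p)‖ ^ 2 ≤ ‖f‖ ^ 2 * ‖g‖ ^ 2 := by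
    rw [← mul_pow]
    exact pow_le_pow_left₀ (norm_nonneg _) hb 2
  calc ENNReal.ofReal (‖(A x - A (P N x)) (k, p)‖ ^ 2)
      ≤ ENNReal.ofReal (‖f‖ ^ 2 * ‖g‖ ^ 2) := ENNReal.ofReal_le_ofReal hb2
    _ = ENNReal.ofReal (‖f‖ ^ 2) * ENNReal.ofReal (‖g‖ ^ 2) :=
        ENNReal.ofReal_mul (by positivity)
    _ ≤ (∑' q : ℕ, ENNReal.ofReal (‖a (p + q + N) k‖ ^ 2)) *
          ENNReal.ofReal (‖x‖ ^ 2) := by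
        refine mul_le_mul' ?_ ?_
        · rw [(lp_sq f).2]
          refine le_of_eq (tsum_congr fun q => ?_)
          rw [hfq]
          simp [RCLike.norm_conj, add_assoc]
        · rw [(lp_sq g).2]
          calc (∑' q : ℕ, ENNReal.ofReal (‖g q‖ ^ 2))
              ≤ ∑' q : ℕ, ENNReal.ofReal (‖x q‖ ^ 2) := by
                have := ENNReal.tsum_comp_le_tsum_of_injective
                  (f := fun q : ℕ => q + N) (add_left_injective N)
                  (fun q => ENNReal.ofReal (‖x q‖ ^ 2))
                simpa [hgq] using this
            _ = ENNReal.ofReal (‖x‖ ^ 2) := ((lp_sq x).2).symm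
end withA
end Stmt6

namespace Stmt6
section withA
variable (a : ℕ → lp (fun _ : ℕ => ℂ) 2)
  (ha : Summable fun j : ℕ => ((j : ℝ) + 1) * ‖a j‖ ^ 2)
  (A : lp (fun _ : ℕ => ℂ) 2 →L[ℂ] lp (fun _ : ℕ × ℕ => ℂ) 2)
  (hA : ∀ (x : lp (fun _ : ℕ => ℂ) 2) (k p : ℕ),
      A x (k, p) = ∑' q : ℕ, a (p + q) k * x q)

/-- The tail quantity `d N = ∑_{j≥N} (j+1)‖a_j‖²`. -/
def dd (N : ℕ) : ℝ := ∑' m : ℕ, (((m + N : ℕ) : ℝ) + 1) * ‖a (m + N)‖ ^ 2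

include ha in
lemma dd_nonneg (N : ℕ) : 0 ≤ dd a N :=
  tsum_nonneg fun m => by positivity

include ha in
lemma dd_tendsto : Filter.Tendsto (fun N => dd a N) atTop (nhds 0) := by
  have := tendsto_sum_nat_add (fun j : ℕ => ((j : ℝ) + 1) * ‖a j‖ ^ 2)
  simpa [dd] using this

include ha in
lemma alpha_sum_le (N : ℕ) :
    (∑' kp : ℕ × ℕ, ∑' q : ℕ, ENNReal.ofReal (‖a (kp.2 + q + N) kp.1‖ ^ 2))
      ≤ ENNReal.ofReal (dd a N) := by
  classical
  calc (∑' kp : ℕ × ℕ, ∑' q : ℕ, ENNReal.ofReal (‖a (kp.2 + q + N) kp.1‖ ^ 2))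
      = ∑' k : ℕ, ∑' p : ℕ, ∑' q : ℕ, ENNReal.ofReal (‖a (p + q + N) k‖ ^ 2) :=
        ENNReal.tsum_prod'
    _ = ∑' p : ℕ, ∑' q : ℕ, ∑' k : ℕ, ENNReal.ofReal (‖a (p + q + N) k‖ ^ 2) := by
        rw [ENNReal.tsum_comm]
        exact tsum_congr fun p => ENNReal.tsum_comm
    _ = ∑' p : ℕ, ∑' q : ℕ, ENNReal.ofReal (‖a (p + q + N)‖ ^ 2) := by
        refine tsum_congr fun p => tsum_congr fun q => ?_
        exact ((lp_sq (a (p + q + N))).2).symm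
    _ = ∑' pq : ℕ × ℕ, ENNReal.ofReal (‖a (pq.1 + pq.2 + N)‖ ^ 2) :=
        (ENNReal.tsum_prod'
          (f := fun pq : ℕ × ℕ => ENNReal.ofReal (‖a (pq.1 + pq.2 + N)‖ ^ 2))).symm
    _ = ∑' m : ℕ, ((m : ℝ≥0∞) + 1) * ENNReal.ofReal (‖a (m + N)‖ ^ 2) :=
        tsum_antidiag (fun m => ENNReal.ofReal (‖a (m + N)‖ ^ 2))
    _ ≤ ∑' m : ℕ, ENNReal.ofReal ((((m + N : ℕ) : ℝ) + 1) * ‖a (m + N)‖ ^ 2) := by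
        refine ENNReal.tsum_le_tsum fun m => ?_
        rw [show ((m : ℝ≥0∞) + 1) = ENNReal.ofReal ((m : ℝ) + 1) by
          rw [ENNReal.ofReal_add (by positivity) zero_le_one]; simp,
          ← ENNReal.ofReal_mul (by positivity)]
        refine ENNReal.ofReal_le_ofReal ?_
        have h1 : ((m : ℝ) + 1) ≤ ((m + N : ℕ) : ℝ) + 1 := by
          push_cast; linarith [Nat.cast_nonneg (α := ℝ) N]
        nlinarith [sq_nonneg ‖a (m + N)‖]
    _ = ENNReal.ofReal (dd a N) := by
        rw [dd, ← ENNReal.ofReal_tsum_of_nonneg (fun m => by positivity)]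
        exact (summable_nat_add_iff
          (f := fun j : ℕ => ((j : ℝ) + 1) * ‖a j‖ ^ 2) N).2 ha

include ha hA in
lemma op_bound (N : ℕ) (x : H) :
    ‖A x - A (P N x)‖ ≤ Real.sqrt (dd a N) * ‖x‖ := by
  classical
  set y : H2 := A x - A (P N x) with hy
  have key : ENNReal.ofReal (‖y‖ ^ 2) ≤ ENNReal.ofReal (dd a N * ‖x‖ ^ 2) := by
    calc ENNReal.ofReal (‖y‖ ^ 2)
        = ∑' kp : ℕ × ℕ, ENNReal.ofReal (‖y kp‖ ^ 2) := (lp_sq y).2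
      _ ≤ ∑' kp : ℕ × ℕ, (∑' q : ℕ, ENNReal.ofReal (‖a (kp.2 + q + N) kp.1‖ ^ 2)) *
            ENNReal.ofReal (‖x‖ ^ 2) := by
          refine ENNReal.tsum_le_tsum fun kp => ?_
          have := pointwise_bound a ha A hA N x kp.1 kp.2
          simpa [hy] using this
      _ = (∑' kp : ℕ × ℕ, ∑' q : ℕ, ENNReal.ofReal (‖a (kp.2 + q + N) kp.1‖ ^ 2)) *
            ENNReal.ofReal (‖x‖ ^ 2) := ENNReal.tsum_mul_right
      _ ≤ ENNReal.ofReal (dd a N) * ENNReal.ofReal (‖x‖ ^ 2) :=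
          mul_le_mul_left (alpha_sum_le a ha N) _
      _ = ENNReal.ofReal (dd a N * ‖x‖ ^ 2) :=
          (ENNReal.ofReal_mul (dd_nonneg a ha N)).symm
  have hreal : ‖y‖ ^ 2 ≤ dd a N * ‖x‖ ^ 2 :=
    (ENNReal.ofReal_le_ofReal_iff (mul_nonneg (dd_nonneg a ha N) (by positivity))).1 key
  have := Real.sqrt_le_sqrt hreal
  rwa [Real.sqrt_sq (norm_nonneg y), Real.sqrt_mul (dd_nonneg a ha N),
    Real.sqrt_sq (norm_nonneg x)] at this

include ha hA in
lemma A_compact : IsCompactOperator (⇑A) := by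
  have hTN : ∀ N : ℕ, IsCompactOperator ⇑(A ∘L P N) := by
    intro N
    rw [ContinuousLinearMap.coe_comp']
    exact (isCompact_P N).continuous_comp A.continuous
  have hnorm : ∀ N : ℕ, ‖A ∘L P N - A‖ ≤ Real.sqrt (dd a N) := by
    intro N
    rw [norm_sub_rev]
    refine ContinuousLinearMap.opNorm_le_bound _ (Real.sqrt_nonneg _) fun x => ?_
    have := op_bound a ha A hA N x
    simpa using this
  have hd0 : Filter.Tendsto (fun N => Real.sqrt (dd a N)) atTop (nhds 0) := by
    have := (Real.continuous_sqrt.tendsto 0).comp (dd_tendsto a ha)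
    simpa [Function.comp_def] using this
  have htend : Filter.Tendsto (fun N => A ∘L P N) atTop (nhds A) := by
    rw [tendsto_iff_norm_sub_tendsto_zero]
    exact squeeze_zero (fun N => norm_nonneg _) hnorm hd0
  exact isCompactOperator_of_tendsto htend (Filter.Eventually.of_forall hTN)

end withA
end Stmt6

open Stmt6 in
/-- For the bounded block Hankel operator
`(A x)(k,p) = Σ_q a_{k,p+q} x_q` with `Σ_j (j+1)‖a_j‖² < ∞`, the operator
`Q = A A*` is self-adjoint, compact and positive, and its matrix entries are
`⟨Q e_{(n,q)}, e_{(k,p)}⟩ = Σ_s a_{k,s+p} · conj(a_{n,s+q})`, the series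
converging absolutely. -/
theorem stmt_6 (a : ℕ → lp (fun _ : ℕ => ℂ) 2)
    (ha : Summable fun j : ℕ => ((j : ℝ) + 1) * ‖a j‖ ^ 2)
    (A : lp (fun _ : ℕ => ℂ) 2 →L[ℂ] lp (fun _ : ℕ × ℕ => ℂ) 2)
    (hA : ∀ (x : lp (fun _ : ℕ => ℂ) 2) (k p : ℕ),
      A x (k, p) = ∑' q : ℕ, a (p + q) k * x q) :
    IsSelfAdjoint (A ∘L ContinuousLinearMap.adjoint A) ∧
      IsCompactOperator (A ∘L ContinuousLinearMap.adjoint A) ∧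
      (A ∘L ContinuousLinearMap.adjoint A).IsPositive ∧
      ∀ k n p q : ℕ,
        (A ∘L ContinuousLinearMap.adjoint A) (lp.single 2 (n, q) 1) (k, p)
            = ∑' s : ℕ, a (s + p) k * conj (a (s + q) n) ∧
          Summable (fun s : ℕ => ‖a (s + p) k * conj (a (s + q) n)‖) := by
  have hpos : (A ∘L ContinuousLinearMap.adjoint A).IsPositive := by
    have := (ContinuousLinearMap.isPositive_one
      (E := lp (fun _ : ℕ => ℂ) 2)).conj_adjoint A
    simpa [ContinuousLinearMap.one_def] using this
  have hcomp : IsCompactOperator (A ∘L ContinuousLinearMap.adjoint A) := by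
    rw [show ⇑(A ∘L ContinuousLinearMap.adjoint A)
      = ⇑A ∘ ⇑(ContinuousLinearMap.adjoint A) from rfl]
    exact (A_compact a ha A hA).comp_clm _
  refine ⟨hpos.isSelfAdjoint, hcomp, hpos, fun k n p q => ⟨?_, habs a ha k n p q⟩⟩
  show A (ContinuousLinearMap.adjoint A (lp.single 2 (n, q) 1)) (k, p) = _
  rw [hA]
  refine tsum_congr fun s => ?_
  rw [adjoint_coord a A hA n q s, add_comm p s, add_comm q s]
end
end

section
/- Let (a_j)_{j∈ℕ} be a sequence of elements of ℓ²(ℕ, ℂ) with Σ_{j=0}^∞ (j + 1)·‖a_j‖² < ∞. Let A be the block Hankel operator with blocks A(p, q) = a_{p+q}, A_N its truncation (blocks a_{p+q} for p + q ≤ N, zero otherwise), Q = A A*, and Q_N = A_N A_N*. Then Q_N converges to Q in operator norm as N → ∞, and in particular the operator norms converge: ‖Q_N‖ → ‖Q‖, i.e. ν_N² → ν², where ν_N² = ‖Q_N‖ and ν² = ‖Q‖ are the greatest eigenvalues of the compact positive self-adjoint operators Q_N and Q. -/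
open Filter ENNReal

set_option maxHeartbeats 1000000

private lemma cs_tsum {u v : ℕ → ℝ} (hu : ∀ q, 0 ≤ u q) (hv : ∀ q, 0 ≤ v q)
    (hu2 : Summable fun q => u q ^ 2) (hv2 : Summable fun q => v q ^ 2) :
    Summable (fun q => u q * v q) ∧
      ∑' q, u q * v q ≤ Real.sqrt (∑' q, u q ^ 2) * Real.sqrt (∑' q, v q ^ 2) := by
  have hsum : Summable fun q => u q * v q := by
    refine Summable.of_nonneg_of_le (fun q => mul_nonneg (hu q) (hv q)) (fun q => ?_)
      ((hu2.add hv2).div_const 2)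
    nlinarith [sq_nonneg (u q - v q)]
  refine ⟨hsum, Summable.tsum_le_of_sum_le hsum fun s => ?_⟩
  have h1 : (∑ q ∈ s, u q * v q) ^ 2 ≤ (∑ q ∈ s, u q ^ 2) * ∑ q ∈ s, v q ^ 2 :=
    Finset.sum_mul_sq_le_sq_mul_sq s u v
  have h2 : ∑ q ∈ s, u q ^ 2 ≤ ∑' q, u q ^ 2 := Summable.sum_le_tsum s (fun i _ => sq_nonneg _) hu2
  have h3 : ∑ q ∈ s, v q ^ 2 ≤ ∑' q, v q ^ 2 := Summable.sum_le_tsum s (fun i _ => sq_nonneg _) hv2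
  have hn : 0 ≤ ∑ q ∈ s, u q * v q := Finset.sum_nonneg fun q _ => mul_nonneg (hu q) (hv q)
  have hu2n : 0 ≤ ∑' q, u q ^ 2 := tsum_nonneg fun _ => sq_nonneg _
  calc ∑ q ∈ s, u q * v q = Real.sqrt ((∑ q ∈ s, u q * v q) ^ 2) := (Real.sqrt_sq hn).symm
    _ ≤ Real.sqrt ((∑' q, u q ^ 2) * ∑' q, v q ^ 2) := by
        refine Real.sqrt_le_sqrt (h1.trans ?_)
        exact mul_le_mul h2 h3 (Finset.sum_nonneg fun i _ => sq_nonneg _) hu2n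
    _ = _ := Real.sqrt_mul hu2n _


private lemma lp_norm_sq' {α : Type*} (f : lp (fun _ : α => ℂ) 2) :
    ‖f‖ ^ 2 = ∑' i, ‖f i‖ ^ 2 := by
  have h := lp.norm_rpow_eq_tsum (p := 2) (by norm_num) f
  rw [show ((2 : ENNReal)).toReal = ((2:ℕ):ℝ) by norm_num] at h
  simpa [Real.rpow_natCast] using h

private lemma lp_summable_sq' {α : Type*} (f : lp (fun _ : α => ℂ) 2) :
    Summable fun i => ‖f i‖ ^ 2 := by
  have h := (lp.memℓp f).summable (p := 2) (by norm_num)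
  rw [show ((2 : ENNReal)).toReal = ((2:ℕ):ℝ) by norm_num] at h
  simpa [Real.rpow_natCast] using h

private noncomputable def gdef (a : ℕ → lp (fun _ : ℕ => ℂ) 2) (N : ℕ) : (ℕ × ℕ) × ℕ → ℝ≥0∞ := fun w =>
  if w.1.2 ≤ w.1.1 ∧ N + 1 ≤ w.1.1 then ENNReal.ofReal (‖a w.1.1 w.2‖ ^ 2) else 0

private def phidef (N : ℕ) : (ℕ × ℕ) × ℕ → (ℕ × ℕ) × ℕ := fun z =>
  ((z.1.2 + (z.2 + (N + 1 - z.1.2)), z.1.2), z.1.1)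

private lemma phidef_inj (N : ℕ) : Function.Injective (phidef N) := by
  rintro ⟨⟨k, p⟩, q⟩ ⟨⟨k', p'⟩, q'⟩ h
  simp only [phidef, Prod.mk.injEq] at h
  obtain ⟨⟨he, hp⟩, hk⟩ := h
  subst hp; subst hk
  simp only [Prod.mk.injEq]
  exact ⟨trivial, by omega⟩

private lemma tsum_S_le (a : ℕ → lp (fun _ : ℕ => ℂ) 2)
    (ha : Summable fun j : ℕ => ((j : ℝ) + 1) * ‖a j‖ ^ 2) (N : ℕ) :
    ∑' kp : ℕ × ℕ, ENNReal.ofReal (∑' q : ℕ, ‖a (kp.2 + (q + (N + 1 - kp.2))) kp.1‖ ^ 2)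
      ≤ ENNReal.ofReal (∑' j : ℕ, (((j + (N + 1) : ℕ) : ℝ) + 1) * ‖a (j + (N + 1))‖ ^ 2) := by
  have ha2 : Summable fun j : ℕ => ‖a j‖ ^ 2 := by
    refine Summable.of_nonneg_of_le (fun _ => sq_nonneg _) (fun j => ?_) ha
    nlinarith [sq_nonneg ‖a j‖, Nat.cast_nonneg (α := ℝ) j]
  have hak2 : ∀ k : ℕ, Summable fun j : ℕ => ‖a j k‖ ^ 2 := fun k => by
    refine Summable.of_nonneg_of_le (fun _ => sq_nonneg _) (fun j => ?_) ha2
    exact pow_le_pow_left₀ (norm_nonneg _) (lp.norm_apply_le_norm (by norm_num) (a j) k) 2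
  have hSsum : ∀ k p : ℕ, Summable fun q : ℕ => ‖a (p + (q + (N + 1 - p))) k‖ ^ 2 := by
    intro k p
    refine (hak2 k).comp_injective (i := fun q => p + (q + (N + 1 - p))) ?_
    intro x y h
    simp only at h
    omega
  calc ∑' kp : ℕ × ℕ, ENNReal.ofReal (∑' q : ℕ, ‖a (kp.2 + (q + (N + 1 - kp.2))) kp.1‖ ^ 2)
      = ∑' (kp : ℕ × ℕ) (q : ℕ),
          ENNReal.ofReal (‖a (kp.2 + (q + (N + 1 - kp.2))) kp.1‖ ^ 2) :=
        tsum_congr fun kp =>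
          ENNReal.ofReal_tsum_of_nonneg (fun _ => sq_nonneg _) (hSsum kp.1 kp.2)
    _ = ∑' z : (ℕ × ℕ) × ℕ,
          ENNReal.ofReal (‖a (z.1.2 + (z.2 + (N + 1 - z.1.2))) z.1.1‖ ^ 2) :=
        by conv_rhs => rw [ENNReal.tsum_prod']
    _ = ∑' z : (ℕ × ℕ) × ℕ, gdef a N (phidef N z) := by
        refine tsum_congr fun z => ?_
        simp only [gdef, phidef]
        exact (if_pos (by omega)).symm
    _ ≤ ∑' w : (ℕ × ℕ) × ℕ, gdef a N w :=
        ENNReal.tsum_comp_le_tsum_of_injective (phidef_inj N) (gdef a N)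
    _ = ∑' (jp : ℕ × ℕ) (k : ℕ), gdef a N (jp, k) := by
        conv_lhs => rw [ENNReal.tsum_prod']
    _ = ∑' jp : ℕ × ℕ,
          (if jp.2 ≤ jp.1 ∧ N + 1 ≤ jp.1 then ENNReal.ofReal (‖a jp.1‖ ^ 2) else 0) := by
        refine tsum_congr fun jp => ?_
        by_cases hc : jp.2 ≤ jp.1 ∧ N + 1 ≤ jp.1
        · have hgk : ∀ k : ℕ, gdef a N (jp, k) = ENNReal.ofReal (‖a jp.1 k‖ ^ 2) := fun k => by
            simp only [gdef]; exact if_pos hc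
          rw [tsum_congr hgk, if_pos hc, lp_norm_sq' (a jp.1),
            ENNReal.ofReal_tsum_of_nonneg (fun _ => sq_nonneg _) (lp_summable_sq' (a jp.1))]
        · simp only [gdef, if_neg hc, tsum_zero]
    _ = ∑' (j : ℕ) (p : ℕ),
          (if p ≤ j ∧ N + 1 ≤ j then ENNReal.ofReal (‖a j‖ ^ 2) else 0) :=
        by
        conv_lhs => rw [ENNReal.tsum_prod']
    _ = ∑' j : ℕ, (if N + 1 ≤ j then ((j + 1 : ℕ) : ℝ≥0∞) * ENNReal.ofReal (‖a j‖ ^ 2) else 0) := by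
        refine tsum_congr fun j => ?_
        by_cases hj : N + 1 ≤ j
        · rw [tsum_eq_sum (s := Finset.range (j + 1))
            (by
              intro p hp
              simp only [Finset.mem_range, not_lt] at hp
              exact if_neg (by omega))]
          rw [Finset.sum_congr rfl (fun p hp =>
            if_pos ⟨Nat.lt_succ_iff.mp (Finset.mem_range.mp hp), hj⟩)]
          rw [Finset.sum_const, Finset.card_range, if_pos hj, nsmul_eq_mul]
        · simp only [hj, if_false]
          refine ENNReal.tsum_eq_zero.mpr fun p => ?_
          simp
    _ = ∑' i : ℕ, (if N + 1 ≤ i + (N + 1)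
          then ((i + (N + 1) + 1 : ℕ) : ℝ≥0∞) * ENNReal.ofReal (‖a (i + (N + 1))‖ ^ 2) else 0) := by
        refine (Function.Injective.tsum_eq (add_left_injective (N + 1)) ?_).symm
        intro j hj
        simp only [Function.mem_support] at hj
        by_cases hjN : N + 1 ≤ j
        · exact ⟨j - (N + 1), by show j - (N + 1) + (N + 1) = j; omega⟩
        · exact absurd (by rw [if_neg hjN]) hj
    _ = ∑' i : ℕ, ENNReal.ofReal ((((i + (N + 1) : ℕ) : ℝ) + 1) * ‖a (i + (N + 1))‖ ^ 2) := by
        refine tsum_congr fun i => ?_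
        rw [if_pos (by omega), ENNReal.ofReal_mul (by positivity)]
        congr 1
        rw [← ENNReal.ofReal_natCast]
        congr 1
        push_cast
        ring
    _ = ENNReal.ofReal (∑' j : ℕ, (((j + (N + 1) : ℕ) : ℝ) + 1) * ‖a (j + (N + 1))‖ ^ 2) :=
        (ENNReal.ofReal_tsum_of_nonneg (fun i => by positivity)
          ((summable_nat_add_iff (N + 1)).mpr ha)).symm


/-- With `A` the block Hankel operator, `A_N` its truncations,
`Q = A A*` and `Q_N = A_N A_N*`, the operators `Q_N` converge to `Q` in operator
norm, and in particular `ν_N² = ‖Q_N‖ → ‖Q‖ = ν²` (the operator norm of a compact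
positive self-adjoint operator being its greatest eigenvalue). -/
theorem stmt_10 (a : ℕ → lp (fun _ : ℕ => ℂ) 2)
    (ha : Summable fun j : ℕ => ((j : ℝ) + 1) * ‖a j‖ ^ 2)
    (A : lp (fun _ : ℕ => ℂ) 2 →L[ℂ] lp (fun _ : ℕ × ℕ => ℂ) 2)
    (hA : ∀ (x : lp (fun _ : ℕ => ℂ) 2) (k p : ℕ),
      A x (k, p) = ∑' q : ℕ, a (p + q) k * x q)
    (AN : ℕ → (lp (fun _ : ℕ => ℂ) 2 →L[ℂ] lp (fun _ : ℕ × ℕ => ℂ) 2))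
    (hAN : ∀ (N : ℕ) (x : lp (fun _ : ℕ => ℂ) 2) (k p : ℕ),
      AN N x (k, p) = ∑ q ∈ Finset.range (N + 1 - p), a (p + q) k * x q) :
    Tendsto
      (fun N : ℕ =>
        ‖AN N ∘L ContinuousLinearMap.adjoint (AN N)
          - A ∘L ContinuousLinearMap.adjoint A‖) atTop (nhds 0) ∧
    Tendsto (fun N : ℕ => ‖AN N ∘L ContinuousLinearMap.adjoint (AN N)‖)
      atTop (nhds ‖A ∘L ContinuousLinearMap.adjoint A‖) := by
  classical
  have ha2 : Summable fun j : ℕ => ‖a j‖ ^ 2 := by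
    refine Summable.of_nonneg_of_le (fun _ => sq_nonneg _) (fun j => ?_) ha
    nlinarith [sq_nonneg ‖a j‖, Nat.cast_nonneg (α := ℝ) j]
  have hak2 : ∀ k : ℕ, Summable fun j : ℕ => ‖a j k‖ ^ 2 := fun k => by
    refine Summable.of_nonneg_of_le (fun _ => sq_nonneg _) (fun j => ?_) ha2
    exact pow_le_pow_left₀ (norm_nonneg _) (lp.norm_apply_le_norm (by norm_num) (a j) k) 2
  -- the tail quantity
  set t : ℕ → ℝ :=
    fun N => ∑' j : ℕ, (((j + (N + 1) : ℕ) : ℝ) + 1) * ‖a (j + (N + 1))‖ ^ 2 with htdef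
  have htn : ∀ N, 0 ≤ t N := fun N => tsum_nonneg fun i => by positivity
  have ht0 : Tendsto t atTop (nhds 0) := by
    have h := (_root_.tendsto_sum_nat_add (f := fun j : ℕ => ((j : ℝ) + 1) * ‖a j‖ ^ 2)).comp
      (tendsto_add_atTop_nat 1)
    exact h
  -- the key operator norm bound
  have key : ∀ N : ℕ, ‖A - AN N‖ ≤ Real.sqrt (t N) := by
    intro N
    refine ContinuousLinearMap.opNorm_le_bound _ (Real.sqrt_nonneg _) fun x => ?_
    have hx2 : Summable fun q : ℕ => ‖x q‖ ^ 2 := lp_summable_sq' x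
    have hxn : ∑' q : ℕ, ‖x q‖ ^ 2 = ‖x‖ ^ 2 := (lp_norm_sq' x).symm
    set S : ℕ × ℕ → ℝ :=
      fun kp => ∑' q : ℕ, ‖a (kp.2 + (q + (N + 1 - kp.2))) kp.1‖ ^ 2 with hSdef
    have hSsum : ∀ k p : ℕ, Summable fun q : ℕ => ‖a (p + (q + (N + 1 - p))) k‖ ^ 2 := by
      intro k p
      refine (hak2 k).comp_injective (i := fun q => p + (q + (N + 1 - p))) ?_
      intro u v h
      simp only at h
      omega
    have hSnn : ∀ kp, 0 ≤ S kp := fun kp => tsum_nonneg fun _ => sq_nonneg _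
    -- pointwise estimate via Cauchy–Schwarz
    have hpt : ∀ k p : ℕ, ‖((A - AN N) x) (k, p)‖ ^ 2 ≤ S (k, p) * ‖x‖ ^ 2 := by
      intro k p
      set m : ℕ := N + 1 - p with hmdef
      have hu2 : Summable fun q : ℕ => ‖a (p + (q + m)) k‖ ^ 2 := hSsum k p
      have hv2 : Summable fun q : ℕ => ‖x (q + m)‖ ^ 2 := by
        refine hx2.comp_injective (i := fun q => q + m) ?_
        intro u v h
        simp only at h
        omega
      obtain ⟨hsuv, hle⟩ := cs_tsum (u := fun q => ‖a (p + (q + m)) k‖)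
        (v := fun q => ‖x (q + m)‖) (fun _ => norm_nonneg _) (fun _ => norm_nonneg _) hu2 hv2
      have hfn : Summable fun q : ℕ => ‖a (p + q) k * x q‖ := by
        have hu2' : Summable fun q : ℕ => ‖a (p + q) k‖ ^ 2 := by
          refine (hak2 k).comp_injective (i := fun q => p + q) ?_
          intro u v h
          simp only at h
          omega
        have := (cs_tsum (u := fun q => ‖a (p + q) k‖) (v := fun q => ‖x q‖)
          (fun _ => norm_nonneg _) (fun _ => norm_nonneg _) hu2' hx2).1
        exact this.congr fun q => (norm_mul _ _).symm
      have hfs : Summable fun q : ℕ => a (p + q) k * x q := hfn.of_norm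
      have hval : ((A - AN N) x) (k, p) = ∑' q : ℕ, a (p + (q + m)) k * x (q + m) := by
        have h0 : ((A - AN N) x) (k, p) = A x (k, p) - AN N x (k, p) := by
          rw [ContinuousLinearMap.sub_apply, lp.coeFn_sub, Pi.sub_apply]
        rw [h0, hA, hAN]
        have hsplit := Summable.sum_add_tsum_nat_add (f := fun q : ℕ => a (p + q) k * x q) m hfs
        rw [← hsplit, hmdef]
        ring
      have h1 : ‖((A - AN N) x) (k, p)‖
          ≤ ∑' q : ℕ, ‖a (p + (q + m)) k‖ * ‖x (q + m)‖ := by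
        rw [hval]
        refine (norm_tsum_le_tsum_norm ?_).trans_eq (tsum_congr fun q => norm_mul _ _)
        exact hsuv.congr fun q => (norm_mul _ _).symm
      have hv2le : ∑' q : ℕ, ‖x (q + m)‖ ^ 2 ≤ ‖x‖ ^ 2 := by
        rw [← hxn]
        have hsplit := Summable.sum_add_tsum_nat_add (f := fun q : ℕ => ‖x q‖ ^ 2) m hx2
        have hnn : 0 ≤ ∑ q ∈ Finset.range m, ‖x q‖ ^ 2 :=
          Finset.sum_nonneg fun _ _ => sq_nonneg _
        linarith
      have hfin : ‖((A - AN N) x) (k, p)‖ ≤ Real.sqrt (S (k, p)) * ‖x‖ := by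
        refine h1.trans (hle.trans ?_)
        have : Real.sqrt (∑' q : ℕ, ‖x (q + m)‖ ^ 2) ≤ ‖x‖ :=
          (Real.sqrt_le_sqrt hv2le).trans_eq (Real.sqrt_sq (norm_nonneg x))
        exact mul_le_mul_of_nonneg_left this (Real.sqrt_nonneg _)
      calc ‖((A - AN N) x) (k, p)‖ ^ 2 ≤ (Real.sqrt (S (k, p)) * ‖x‖) ^ 2 :=
            pow_le_pow_left₀ (norm_nonneg _) hfin 2
        _ = S (k, p) * ‖x‖ ^ 2 := by rw [mul_pow, Real.sq_sqrt (hSnn _)]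
    -- summing the pointwise estimates
    have hSfin : ∀ s : Finset (ℕ × ℕ), ∑ kp ∈ s, S kp ≤ t N := by
      intro s
      rw [← ENNReal.ofReal_le_ofReal_iff (htn N)]
      calc ENNReal.ofReal (∑ kp ∈ s, S kp)
          = ∑ kp ∈ s, ENNReal.ofReal (S kp) :=
            ENNReal.ofReal_sum_of_nonneg fun kp _ => hSnn kp
        _ ≤ ∑' kp : ℕ × ℕ, ENNReal.ofReal (S kp) := ENNReal.sum_le_tsum s
        _ ≤ ENNReal.ofReal (t N) := tsum_S_le a ha N
    have hDsm : Summable fun kp : ℕ × ℕ => ‖((A - AN N) x) kp‖ ^ 2 :=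
      lp_summable_sq' ((A - AN N) x)
    have hsum_le : ∑' kp : ℕ × ℕ, ‖((A - AN N) x) kp‖ ^ 2 ≤ t N * ‖x‖ ^ 2 := by
      refine Summable.tsum_le_of_sum_le hDsm fun s => ?_
      calc ∑ kp ∈ s, ‖((A - AN N) x) kp‖ ^ 2
          ≤ ∑ kp ∈ s, S kp * ‖x‖ ^ 2 :=
            Finset.sum_le_sum fun kp _ => by simpa using hpt kp.1 kp.2
        _ = (∑ kp ∈ s, S kp) * ‖x‖ ^ 2 := (Finset.sum_mul _ _ _).symm
        _ ≤ t N * ‖x‖ ^ 2 := mul_le_mul_of_nonneg_right (hSfin s) (sq_nonneg _)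
    have hnorm2 : ‖(A - AN N) x‖ ^ 2 ≤ t N * ‖x‖ ^ 2 := by
      rw [lp_norm_sq']
      exact hsum_le
    calc ‖(A - AN N) x‖ = Real.sqrt (‖(A - AN N) x‖ ^ 2) :=
          (Real.sqrt_sq (norm_nonneg _)).symm
      _ ≤ Real.sqrt (t N * ‖x‖ ^ 2) := Real.sqrt_le_sqrt hnorm2
      _ = Real.sqrt (t N) * ‖x‖ := by
          rw [Real.sqrt_mul (htn N), Real.sqrt_sq (norm_nonneg _)]
  -- convergence of the truncations in operator norm
  have keyAN : Tendsto (fun N : ℕ => ‖AN N - A‖) atTop (nhds 0) := by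
    have hsq : Tendsto (fun N : ℕ => Real.sqrt (t N)) atTop (nhds 0) := by
      have := (Real.continuous_sqrt.tendsto 0).comp ht0
      simpa [Function.comp_def] using this
    refine squeeze_zero (fun N => norm_nonneg _) (fun N => ?_) hsq
    rw [norm_sub_rev]
    exact key N
  have hANlim : Tendsto AN atTop (nhds A) := tendsto_iff_norm_sub_tendsto_zero.mpr keyAN
  have hadj : Tendsto (fun N : ℕ => ContinuousLinearMap.adjoint (AN N)) atTop
      (nhds (ContinuousLinearMap.adjoint A)) :=
    ((ContinuousLinearMap.adjoint
      (E := lp (fun _ : ℕ => ℂ) 2) (F := lp (fun _ : ℕ × ℕ => ℂ) 2)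
      (𝕜 := ℂ)).continuous.tendsto A).comp hANlim
  have hQ : Tendsto (fun N : ℕ => AN N ∘L ContinuousLinearMap.adjoint (AN N)) atTop
      (nhds (A ∘L ContinuousLinearMap.adjoint A)) := by
    have hcomp := (isBoundedBilinearMap_comp
      (𝕜 := ℂ) (E := lp (fun _ : ℕ × ℕ => ℂ) 2) (F := lp (fun _ : ℕ => ℂ) 2)
      (G := lp (fun _ : ℕ × ℕ => ℂ) 2)).continuous
    exact (hcomp.tendsto (A, ContinuousLinearMap.adjoint A)).comp (hANlim.prodMk_nhds hadj)
  exact ⟨tendsto_iff_norm_sub_tendsto_zero.mp hQ, (continuous_norm.tendsto _).comp hQ⟩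
end

section
/- Let (a_j)_{j∈ℕ} be a sequence of elements of ℓ²(ℕ, ℂ) satisfying Σ_{j=0}^∞ ‖a_j‖ < ∞ and Σ_{j=0}^∞ (j + 1)·‖a_j‖² < ∞, let A : ℓ²(ℕ, ℂ) → ℓ²(ℕ × ℕ, ℂ) be the block Hankel operator (A x)(k, p) = Σ_q a_{k, p+q}·x_q, and let Q = A A*. Then Q is a self-adjoint compact positive operator; for every P > 0, the supremum of ⟨Q g, g⟩ over all g ∈ ℓ²(ℕ × ℕ, ℂ) with ‖g‖² ≤ P is attained and equals P·ν², where ν² = ‖Q‖ is the greatest eigenvalue of Q; and ν² = lim_{N→∞} ν_N², where ν_N² = ‖A_N A_N*‖ for the truncations A_N of A (blocks a_{p+q} for p + q ≤ N, zero otherwise). -/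
set_option maxHeartbeats 1000000

open Filter Topology ENNReal

namespace Stmt15Aux

lemma cs_tsum {u v : ℕ → ℝ} (hu : ∀ q, 0 ≤ u q) (hv : ∀ q, 0 ≤ v q)
    (h2u : Summable fun q => u q ^ 2) (h2v : Summable fun q => v q ^ 2) :
    (∑' q, u q * v q) ^ 2 ≤ (∑' q, u q ^ 2) * ∑' q, v q ^ 2 := by
  have huv : Summable fun q => u q * v q := by
    refine Summable.of_nonneg_of_le (fun q => mul_nonneg (hu q) (hv q)) (fun q => ?_)
      (h2u.add h2v)
    nlinarith [sq_nonneg (u q - v q)]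
  have h1 : ∑' q, u q * v q ≤ Real.sqrt ((∑' q, u q ^ 2) * ∑' q, v q ^ 2) := by
    refine Summable.tsum_le_of_sum_le huv fun s => ?_
    have h2 : (∑ q ∈ s, u q * v q) ^ 2 ≤ (∑ q ∈ s, u q ^ 2) * ∑ q ∈ s, v q ^ 2 :=
      Finset.sum_mul_sq_le_sq_mul_sq s u v
    have h3 : (∑ q ∈ s, u q ^ 2) * ∑ q ∈ s, v q ^ 2 ≤ (∑' q, u q ^ 2) * ∑' q, v q ^ 2 :=
      mul_le_mul (Summable.sum_le_tsum s (fun q _ => sq_nonneg _) h2u)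
        (Summable.sum_le_tsum s (fun q _ => sq_nonneg _) h2v)
        (Finset.sum_nonneg fun q _ => sq_nonneg _) (tsum_nonneg fun q => sq_nonneg _)
    calc ∑ q ∈ s, u q * v q = Real.sqrt ((∑ q ∈ s, u q * v q) ^ 2) :=
          (Real.sqrt_sq (Finset.sum_nonneg fun q _ => mul_nonneg (hu q) (hv q))).symm
      _ ≤ _ := Real.sqrt_le_sqrt (h2.trans h3)
  have hnn : 0 ≤ ∑' q, u q * v q := tsum_nonneg fun q => mul_nonneg (hu q) (hv q)
  calc (∑' q, u q * v q) ^ 2 ≤ Real.sqrt ((∑' q, u q ^ 2) * ∑' q, v q ^ 2) ^ 2 :=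
        pow_le_pow_left₀ hnn h1 2
    _ = _ := Real.sq_sqrt (mul_nonneg (tsum_nonneg fun q => sq_nonneg _)
        (tsum_nonneg fun q => sq_nonneg _))

def sigEquiv : (Σ j : ℕ, Fin (j + 1)) ≃ ℕ × ℕ where
  toFun x := (x.2, x.1 - x.2)
  invFun y := ⟨y.1 + y.2, ⟨y.1, Nat.lt_succ_of_le (Nat.le_add_right _ _)⟩⟩
  left_inv := by
    rintro ⟨j, i⟩
    have h : (i : ℕ) ≤ j := Nat.lt_succ_iff.mp i.isLt
    have hj : (i : ℕ) + (j - i) = j := Nat.add_sub_cancel' h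
    dsimp only
    exact Sigma.ext hj ((Fin.heq_ext_iff (by dsimp only; omega)).2 rfl)
  right_inv := by rintro ⟨p, q⟩; simp

lemma sum_pair {c : ℕ → ℝ} (hc : ∀ j, 0 ≤ c j)
    (hsum : Summable fun j : ℕ => ((j : ℝ) + 1) * c j) :
    Summable (fun y : ℕ × ℕ => c (y.1 + y.2)) ∧
      ∑' y : ℕ × ℕ, c (y.1 + y.2) = ∑' j : ℕ, ((j : ℝ) + 1) * c j := by
  have hcomp : ∀ x : Σ j : ℕ, Fin (j + 1), c ((sigEquiv x).1 + (sigEquiv x).2) = c x.1 := by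
    rintro ⟨j, i⟩
    have h : (i : ℕ) ≤ j := Nat.lt_succ_iff.mp i.isLt
    simp [sigEquiv, Nat.add_sub_cancel' h]
  have hfib : ∀ j : ℕ, ∑' _ : Fin (j + 1), c j = ((j : ℝ) + 1) * c j := by
    intro j
    rw [tsum_fintype, Finset.sum_const]
    simp [nsmul_eq_mul]
  have hs : Summable fun x : Σ j : ℕ, Fin (j + 1) => c x.1 := by
    apply (summable_sigma_of_nonneg fun x => hc x.1).2
    refine ⟨fun j => Summable.of_finite, ?_⟩
    simpa only [hfib] using hsum
  have hs' : Summable (fun y : ℕ × ℕ => c (y.1 + y.2)) := by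
    rw [← Equiv.summable_iff sigEquiv]
    exact hs.congr fun x => (hcomp x).symm
  refine ⟨hs', ?_⟩
  calc ∑' y : ℕ × ℕ, c (y.1 + y.2) = ∑' x : Σ j : ℕ, Fin (j + 1), c ((sigEquiv x).1 + (sigEquiv x).2) :=
        (Equiv.tsum_eq sigEquiv _).symm
    _ = ∑' x : Σ j : ℕ, Fin (j + 1), c x.1 := tsum_congr hcomp
    _ = ∑' j, ∑' _ : Fin (j + 1), c j := Summable.tsum_sigma' (fun j => Summable.of_finite) hs
    _ = ∑' j : ℕ, ((j : ℝ) + 1) * c j := tsum_congr hfib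

lemma tendsto_tail (b : ℕ → ℝ) (hb : Summable b) (hnn : ∀ j, 0 ≤ b j) :
    Tendsto (fun N => ∑' j, if N < j then b j else 0) atTop (𝓝 0) := by
  have hstail : ∀ N : ℕ, Summable fun j => if N < j then b j else 0 := fun N =>
    Summable.of_nonneg_of_le (fun j => by by_cases h : N < j <;> simp [h, hnn j])
      (fun j => by by_cases h : N < j <;> simp [h, hnn j]) hb
  have key : ∀ N : ℕ, ∑' j, (if N < j then b j else 0)
      = (∑' j, b j) - ∑ j ∈ Finset.range (N + 1), b j := by
    intro N
    have hsh : Summable fun j => if j ≤ N then b j else 0 :=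
      Summable.of_nonneg_of_le (fun j => by by_cases h : j ≤ N <;> simp [h, hnn j])
        (fun j => by by_cases h : j ≤ N <;> simp [h, hnn j]) hb
    have hpt : ∀ j, b j = (if j ≤ N then b j else 0) + (if N < j then b j else 0) := by
      intro j
      by_cases h : j ≤ N
      · simp [h, not_lt.mpr h]
      · simp [h, not_le.mp h]
    have hsum : ∑' j, b j = (∑' j, (if j ≤ N then b j else 0)) + ∑' j, (if N < j then b j else 0) := by
      rw [← Summable.tsum_add hsh (hstail N)]
      exact tsum_congr hpt
    have hfin : ∑' j, (if j ≤ N then b j else 0) = ∑ j ∈ Finset.range (N + 1), b j := by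
      rw [tsum_eq_sum (s := Finset.range (N + 1))
        (fun j hj => by simp [Finset.mem_range, Nat.lt_succ_iff] at hj; simp [hj])]
      exact Finset.sum_congr rfl fun j hj => by
        simp [Finset.mem_range, Nat.lt_succ_iff] at hj; simp [hj]
    rw [hsum, hfin]; ring
  simp only [key]
  have := (hb.hasSum.tendsto_sum_nat.comp (tendsto_add_atTop_nat 1)).const_sub (∑' j, b j)
  simpa using this

lemma lp_summable_sq {ι : Type*} (y : lp (fun _ : ι => ℂ) 2) :
    Summable fun i => ‖y i‖ ^ 2 := by
  have h := (memℓp_gen_iff (p := 2) (by norm_num)).1 (lp.memℓp y)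
  have h2 : ∀ r : ℝ, 0 ≤ r → r ^ ((2 : ℝ≥0∞)).toReal = r ^ 2 := by
    intro r hr
    rw [ENNReal.toReal_ofNat, show ((2:ℝ)) = ((2:ℕ):ℝ) by norm_num, Real.rpow_natCast]
  exact h.congr fun i => h2 _ (norm_nonneg _)

lemma lp_norm_sq {ι : Type*} (y : lp (fun _ : ι => ℂ) 2) :
    ‖y‖ ^ 2 = ∑' i, ‖y i‖ ^ 2 := by
  have h := lp.norm_rpow_eq_tsum (p := 2) (by norm_num) y
  have h2 : ∀ r : ℝ, 0 ≤ r → r ^ ((2 : ℝ≥0∞)).toReal = r ^ 2 := by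
    intro r hr
    rw [ENNReal.toReal_ofNat, show ((2:ℝ)) = ((2:ℕ):ℝ) by norm_num, Real.rpow_natCast]
  rw [← h2 _ (norm_nonneg _), h]
  exact tsum_congr fun i => h2 _ (norm_nonneg _)

lemma normQ_eq {E' F' : Type*} [NormedAddCommGroup E'] [InnerProductSpace ℂ E']
    [CompleteSpace E'] [NormedAddCommGroup F'] [InnerProductSpace ℂ F'] [CompleteSpace F']
    (B : E' →L[ℂ] F') : ‖B ∘L ContinuousLinearMap.adjoint B‖ = ‖B‖ * ‖B‖ := by
  have h1 := ContinuousLinearMap.norm_adjoint_comp_self (ContinuousLinearMap.adjoint B)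
  rw [ContinuousLinearMap.adjoint_adjoint] at h1
  rw [h1]
  have h2 : ‖ContinuousLinearMap.adjoint B‖ = ‖B‖ :=
    ContinuousLinearMap.adjoint.norm_map B
  rw [h2]

lemma key_norm_bound (a : ℕ → lp (fun _ : ℕ => ℂ) 2)
    (ha1 : Summable fun j : ℕ => ‖a j‖)
    (ha2 : Summable fun j : ℕ => ((j : ℝ) + 1) * ‖a j‖ ^ 2)
    (A : lp (fun _ : ℕ => ℂ) 2 →L[ℂ] lp (fun _ : ℕ × ℕ => ℂ) 2)
    (hA : ∀ (x : lp (fun _ : ℕ => ℂ) 2) (k p : ℕ),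
      A x (k, p) = ∑' q : ℕ, a (p + q) k * x q)
    (B : lp (fun _ : ℕ => ℂ) 2 →L[ℂ] lp (fun _ : ℕ × ℕ => ℂ) 2) (N : ℕ)
    (hB : ∀ (x : lp (fun _ : ℕ => ℂ) 2) (k p : ℕ),
      B x (k, p) = ∑ q ∈ Finset.range (N + 1 - p), a (p + q) k * x q) :
    ‖A - B‖ ≤ Real.sqrt (∑' j : ℕ, if N < j then ((j : ℝ) + 1) * ‖a j‖ ^ 2 else 0) := by
  set t : ℝ := ∑' j : ℕ, if N < j then ((j : ℝ) + 1) * ‖a j‖ ^ 2 else 0 with ht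
  have ht0 : 0 ≤ t := tsum_nonneg fun j => by positivity
  -- basic data
  set W : ℕ → ℕ → ℕ → ℝ := fun p q k => if N < p + q then ‖a (p + q) k‖ ^ 2 else 0 with hW
  set H : ℕ → ℕ → ℝ := fun p q => if N < p + q then ‖a (p + q)‖ ^ 2 else 0 with hH
  have hWnn : ∀ p q k, 0 ≤ W p q k := fun p q k => by dsimp [W]; positivity
  have hHnn : ∀ p q, 0 ≤ H p q := fun p q => by dsimp [H]; positivity
  have hiW : ∀ p q, Summable (fun k => W p q k) ∧ ∑' k, W p q k = H p q := by
    intro p q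
    by_cases h : N < p + q
    · simp only [W, H, if_pos h]
      exact ⟨lp_summable_sq _, (lp_norm_sq _).symm⟩
    · simp only [W, H, if_neg h]
      exact ⟨summable_zero, tsum_zero⟩
  have hWleH : ∀ p q k, W p q k ≤ H p q := by
    intro p q k
    dsimp [W, H]
    split
    · have h1 := lp.norm_apply_le_norm (E := fun _ : ℕ => ℂ) (p := 2) (by norm_num)
        (a (p + q)) k
      exact pow_le_pow_left₀ (norm_nonneg _) h1 2
    · exact le_rfl
  have hii : ∀ p, Summable fun q => H p q := by
    intro p
    refine Summable.of_nonneg_of_le (fun q => hHnn p q) (fun q => ?_)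
      (ha2.comp_injective (add_right_injective p))
    dsimp [H]
    split
    · nlinarith [sq_nonneg ‖a (p + q)‖, Nat.cast_nonneg (α := ℝ) (p + q)]
    · positivity
  have hWk : ∀ p k, Summable fun q => W p q k := fun p k =>
    Summable.of_nonneg_of_le (fun q => hWnn p q k) (fun q => hWleH p q k) (hii p)
  -- the H sums
  have hc : ∀ j, (0:ℝ) ≤ if N < j then ‖a j‖ ^ 2 else 0 := fun j => by positivity
  have hcsum : Summable fun j : ℕ => ((j : ℝ) + 1) * (if N < j then ‖a j‖ ^ 2 else 0) := by
    refine Summable.of_nonneg_of_le (fun j => by positivity) (fun j => ?_) ha2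
    split
    · exact le_rfl
    · rw [mul_zero]
      positivity
  obtain ⟨hHsummable, hHsum⟩ := sum_pair hc hcsum
  have hHsum' : ∑' y : ℕ × ℕ, H y.1 y.2 = t := by
    have e1 : ∀ y : ℕ × ℕ, H y.1 y.2 = (if N < y.1 + y.2 then ‖a (y.1 + y.2)‖ ^ 2 else 0) :=
      fun y => rfl
    rw [ht]
    calc ∑' y : ℕ × ℕ, H y.1 y.2 = ∑' j : ℕ, ((j : ℝ) + 1) * (if N < j then ‖a j‖ ^ 2 else 0) := hHsum
      _ = _ := tsum_congr fun j => by split <;> ring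
  have hHsummable' : Summable (fun y : ℕ × ℕ => H y.1 y.2) := hHsummable
  -- for fixed p, Fubini in (q,k)
  have hiv : ∀ p, Summable fun z : ℕ × ℕ => W p z.1 z.2 := by
    intro p
    refine (summable_prod_of_nonneg (fun z => hWnn p z.1 z.2)).2 ⟨fun q => (hiW p q).1, ?_⟩
    exact (hii p).congr fun q => ((hiW p q).2).symm
  have hτ : ∀ p, ∑' k, ∑' q, W p q k = ∑' q, H p q := by
    intro p
    have := Summable.tsum_comm' (f := fun q k => W p q k) (hiv p) (fun q => (hiW p q).1) (hWk p)
    rw [this]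
    exact tsum_congr fun q => (hiW p q).2
  have hks : ∀ p, Summable fun k => ∑' q, W p q k := by
    intro p
    exact ((hiv p).prod_symm).prod
  have hτsummable : Summable fun p => ∑' q, H p q := hHsummable'.prod
  -- the majorant over (k,p)
  set m : ℕ × ℕ → ℝ := fun i => ∑' q, W i.2 q i.1 with hm
  have hmnn : ∀ i, 0 ≤ m i := fun i => tsum_nonneg fun q => hWnn _ _ _
  have hm'summable : Summable fun z : ℕ × ℕ => ∑' q, W z.1 q z.2 := by
    refine (summable_prod_of_nonneg (fun z => tsum_nonneg fun q => hWnn _ _ _)).2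
      ⟨fun p => hks p, ?_⟩
    exact hτsummable.congr fun p => (hτ p).symm
  have hmsummable : Summable m := by
    have := (Equiv.prodComm ℕ ℕ).summable_iff (f := m)
    rw [← this]
    exact hm'summable.congr fun z => rfl
  have hmsum : ∑' i, m i = t := by
    calc ∑' i : ℕ × ℕ, m i = ∑' z : ℕ × ℕ, ∑' q, W z.1 q z.2 := by
          rw [← (Equiv.prodComm ℕ ℕ).tsum_eq (f := m)]
          exact tsum_congr fun z => rfl
      _ = ∑' p, ∑' k, ∑' q, W p q k := Summable.tsum_prod' hm'summable fun p => hks p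
      _ = ∑' p, ∑' q, H p q := tsum_congr hτ
      _ = ∑' y : ℕ × ℕ, H y.1 y.2 := (Summable.tsum_prod' hHsummable' fun p => (hii p)).symm
      _ = t := hHsum'
  -- the operator norm bound
  refine ContinuousLinearMap.opNorm_le_bound _ (Real.sqrt_nonneg _) fun x => ?_
  have hxsq : Summable fun q : ℕ => ‖x q‖ ^ 2 := lp_summable_sq x
  -- entrywise estimate
  have hentry : ∀ i : ℕ × ℕ, ‖((A - B) x) i‖ ^ 2 ≤ m i * ‖x‖ ^ 2 := by
    rintro ⟨k, p⟩
    set f : ℕ → ℂ := fun q => a (p + q) k * x q with hf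
    have hbnd : ∀ q, ‖f q‖ ≤ ‖a (p + q)‖ * ‖x‖ := by
      intro q
      rw [hf, norm_mul]
      exact mul_le_mul (lp.norm_apply_le_norm (p := 2) (by norm_num) _ _)
        (lp.norm_apply_le_norm (p := 2) (by norm_num) _ _) (norm_nonneg _) (norm_nonneg _)
    have hbsumm : Summable fun q => ‖a (p + q)‖ * ‖x‖ :=
      (ha1.comp_injective (add_right_injective p)).mul_right ‖x‖
    have hfs : Summable f := Summable.of_norm_bounded hbsumm hbnd
    have hcond : ∀ q, q ∈ Finset.range (N + 1 - p) ↔ ¬ N < p + q := by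
      intro q; rw [Finset.mem_range]; omega
    have hite2 : Summable fun q => if N < p + q then f q else 0 := by
      refine Summable.of_norm_bounded hbsumm fun q => ?_
      split
      · exact hbnd q
      · simpa using mul_nonneg (norm_nonneg _) (norm_nonneg _)
    have hite1 : Summable fun q => if q ∈ Finset.range (N + 1 - p) then f q else 0 :=
      summable_of_ne_finset_zero (s := Finset.range (N + 1 - p))
        (fun q hq => if_neg hq)
    have hsplit : (∑' q, f q) = (∑ q ∈ Finset.range (N + 1 - p), f q)
        + ∑' q, (if N < p + q then f q else 0) := by
      have hpt : ∀ q, f q = (if q ∈ Finset.range (N + 1 - p) then f q else 0)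
          + (if N < p + q then f q else 0) := by
        intro q
        by_cases h : N < p + q
        · rw [if_pos h, if_neg (fun hq => (hcond q).1 hq h), zero_add]
        · rw [if_neg h, if_pos ((hcond q).2 h), add_zero]
      calc ∑' q, f q
          = ∑' q, ((if q ∈ Finset.range (N + 1 - p) then f q else 0)
            + (if N < p + q then f q else 0)) := tsum_congr hpt
        _ = (∑' q, if q ∈ Finset.range (N + 1 - p) then f q else 0)
            + ∑' q, (if N < p + q then f q else 0) := Summable.tsum_add hite1 hite2
        _ = (∑ q ∈ Finset.range (N + 1 - p), f q)
            + ∑' q, (if N < p + q then f q else 0) := by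
              congr 1
              rw [tsum_eq_sum (s := Finset.range (N + 1 - p)) (fun q hq => if_neg hq)]
              exact Finset.sum_congr rfl fun q hq => if_pos hq
    have hval : ((A - B) x) (k, p) = ∑' q, (if N < p + q then f q else 0) := by
      have hsub : ((A - B) x) (k, p) = A x (k, p) - B x (k, p) := by
        rw [ContinuousLinearMap.sub_apply, lp.coeFn_sub, Pi.sub_apply]
      rw [hsub, hA, hB, hsplit]
      ring
    set u : ℕ → ℝ := fun q => if N < p + q then ‖(a (p + q)) k‖ else 0 with hu
    have hunn : ∀ q, 0 ≤ u q := fun q => by dsimp [u]; split <;> positivity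
    have husq : ∀ q, u q ^ 2 = W p q k := fun q => by
      dsimp [u, W]; split <;> simp
    have h2u : Summable fun q => u q ^ 2 := (hWk p k).congr fun q => (husq q).symm
    have hnorm_ite : ∀ q, ‖(if N < p + q then f q else 0)‖ = u q * ‖x q‖ := by
      intro q
      dsimp [u, f]
      split
      · exact norm_mul (α := ℂ) _ _
      · simp
    have hnsum : Summable fun q => ‖(if N < p + q then f q else 0)‖ := by
      refine Summable.of_nonneg_of_le (fun q => norm_nonneg _) (fun q => ?_) hbsumm
      split
      · exact hbnd _
      · simpa using mul_nonneg (norm_nonneg _) (norm_nonneg _)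
    have h1 : ‖((A - B) x) (k, p)‖ ≤ ∑' q, u q * ‖x q‖ := by
      rw [hval]
      exact (norm_tsum_le_tsum_norm hnsum).trans_eq (tsum_congr hnorm_ite)
    have hcs := cs_tsum hunn (fun q => norm_nonneg _) h2u hxsq
    calc ‖((A - B) x) (k, p)‖ ^ 2 ≤ (∑' q, u q * ‖x q‖) ^ 2 :=
          pow_le_pow_left₀ (norm_nonneg _) h1 2
      _ ≤ (∑' q, u q ^ 2) * ∑' q, ‖x q‖ ^ 2 := hcs
      _ = m (k, p) * ‖x‖ ^ 2 := by
          rw [← lp_norm_sq x]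
          congr 1
          exact tsum_congr fun q => husq q
  have hsq : ‖(A - B) x‖ ^ 2 ≤ t * ‖x‖ ^ 2 := by
    rw [lp_norm_sq ((A - B) x)]
    calc ∑' i, ‖((A - B) x) i‖ ^ 2 ≤ ∑' i, m i * ‖x‖ ^ 2 :=
          Summable.tsum_le_tsum hentry (lp_summable_sq _) (hmsummable.mul_right _)
      _ = t * ‖x‖ ^ 2 := by rw [tsum_mul_right, hmsum]
  calc ‖(A - B) x‖ = Real.sqrt (‖(A - B) x‖ ^ 2) := (Real.sqrt_sq (norm_nonneg _)).symm
    _ ≤ Real.sqrt (t * ‖x‖ ^ 2) := Real.sqrt_le_sqrt hsq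
    _ = Real.sqrt t * ‖x‖ := by
        rw [Real.sqrt_mul ht0, Real.sqrt_sq (norm_nonneg _)]

lemma isCompactOperator_of_mem_finiteDimensional {E F : Type*} [NormedAddCommGroup E]
    [NormedSpace ℂ E] [NormedAddCommGroup F] [NormedSpace ℂ F]
    (B : E →L[ℂ] F) (V : Submodule ℂ F) [FiniteDimensional ℂ V] (h : ∀ x, B x ∈ V) :
    IsCompactOperator (B : E →L[ℂ] F) := by
  set g : E →L[ℂ] V := B.codRestrict V h with hg
  refine ⟨Subtype.val '' Metric.closedBall (0 : V) ‖g‖, ?_, ?_⟩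
  · exact (isCompact_closedBall _ _).image continuous_subtype_val
  · refine mem_of_superset (Metric.ball_mem_nhds 0 one_pos) ?_
    intro x hx
    refine ⟨g x, ?_, rfl⟩
    rw [Metric.mem_closedBall, dist_zero_right]
    have hx1 : ‖x‖ ≤ 1 := by
      rw [Metric.mem_ball, dist_zero_right] at hx
      exact hx.le
    calc ‖g x‖ ≤ ‖g‖ * ‖x‖ := g.le_opNorm x
      _ ≤ ‖g‖ * 1 := by gcongr
      _ = ‖g‖ := mul_one _

open InnerProduct in
open scoped InnerProductSpace in
lemma exists_eigenvector {E F : Type*} [NormedAddCommGroup E] [InnerProductSpace ℂ E]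
    [CompleteSpace E] [NormedAddCommGroup F] [InnerProductSpace ℂ F] [CompleteSpace F]
    (A : E →L[ℂ] F) (hA0 : A ≠ 0)
    (hcomp : IsCompactOperator (A ∘L ContinuousLinearMap.adjoint A)) :
    ∃ g : F, g ≠ 0 ∧ (A ∘L ContinuousLinearMap.adjoint A) g
      = (‖A ∘L ContinuousLinearMap.adjoint A‖ : ℂ) • g := by
  classical
  set T : F →L[ℂ] E := ContinuousLinearMap.adjoint A with hT
  set Q : F →L[ℂ] F := A ∘L T with hQdef
  have hAT : ContinuousLinearMap.adjoint T = A := by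
    rw [hT, ContinuousLinearMap.adjoint_adjoint]
  have hQnorm : ‖Q‖ = ‖T‖ * ‖T‖ := by
    rw [hQdef, ← hAT]
    exact ContinuousLinearMap.norm_adjoint_comp_self T
  set ν : ℝ := ‖Q‖ with hν
  have hT0 : T ≠ 0 := by
    intro h
    apply hA0
    rw [← hAT, h]
    simp
  have hTpos : 0 < ‖T‖ := by
    rcases lt_or_eq_of_le (norm_nonneg T) with h | h
    · exact h
    · exact absurd (ContinuousLinearMap.opNorm_zero_iff T |>.1 h.symm) hT0
  have hνpos : 0 < ν := by rw [hQnorm]; positivity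
  -- maximizing sequence
  have hseq : ∀ n : ℕ, ∃ x : F, ‖x‖ < 1 ∧ ‖T‖ - 1 / (n + 1) < ‖T x‖ := by
    intro n
    refine T.exists_lt_apply_of_lt_opNorm ?_
    have : (0:ℝ) < 1 / (n + 1) := by positivity
    linarith
  choose x hx1 hx2 using hseq
  have hxle : ∀ n, ‖T (x n)‖ ≤ ‖T‖ := fun n => by
    calc ‖T (x n)‖ ≤ ‖T‖ * ‖x n‖ := T.le_opNorm _
      _ ≤ ‖T‖ * 1 := mul_le_mul_of_nonneg_left (hx1 n).le (norm_nonneg _)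
      _ = ‖T‖ := mul_one _
  have htend : Tendsto (fun n => ‖T (x n)‖) atTop (𝓝 ‖T‖) := by
    refine tendsto_of_tendsto_of_tendsto_of_le_of_le
      (g := fun n : ℕ => ‖T‖ - 1 / (n + 1)) (h := fun _ : ℕ => ‖T‖) ?_ (tendsto_const_nhds : Tendsto (fun _ : ℕ => ‖T‖) atTop (𝓝 ‖T‖))
      (fun n => (hx2 n).le) hxle
    have := tendsto_one_div_add_atTop_nhds_zero_nat (𝕜 := ℝ)
    have h2 := (tendsto_const_nhds : Tendsto (fun _ : ℕ => ‖T‖) atTop (𝓝 ‖T‖)).sub this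
    simpa using h2
  have htend2 : Tendsto (fun n => ‖T (x n)‖ ^ 2) atTop (𝓝 ν) := by
    have := htend.mul htend
    rw [← hQnorm] at this
    exact this.congr fun n => (sq ‖T (x n)‖).symm
  -- the defect tends to zero
  have hTx_sq_le : ∀ n, ‖T (x n)‖ ^ 2 ≤ ν := by
    intro n
    rw [hQnorm]
    have := hxle n
    nlinarith [norm_nonneg (T (x n))]
  have hkey : ∀ n, ‖Q (x n) - (ν : ℂ) • x n‖ ^ 2 ≤ 2 * ν * (ν - ‖T (x n)‖ ^ 2) := by
    intro n
    have hre : RCLike.re (⟪Q (x n), x n⟫_ℂ) = ‖T (x n)‖ ^ 2 := by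
      have h1 : ⟪Q (x n), x n⟫_ℂ = ⟪T (x n), T (x n)⟫_ℂ := by
        rw [hQdef]
        calc ⟪(A ∘L T) (x n), x n⟫_ℂ = ⟪(ContinuousLinearMap.adjoint T) (T (x n)), x n⟫_ℂ := by
              rw [hAT]; rfl
          _ = ⟪T (x n), T (x n)⟫_ℂ := ContinuousLinearMap.adjoint_inner_left T _ _
      rw [h1]
      exact inner_self_eq_norm_sq _
    have hexp := norm_sub_sq (𝕜 := ℂ) (Q (x n)) ((ν : ℂ) • x n)
    have hsm : RCLike.re (⟪Q (x n), (ν : ℂ) • x n⟫_ℂ) = ν * ‖T (x n)‖ ^ 2 := by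
      rw [inner_smul_right]
      change ((ν : ℂ) * _).re = _
      rw [Complex.re_ofReal_mul]
      congr 1
    have hQx : ‖Q (x n)‖ ^ 2 ≤ ν ^ 2 := by
      have h1 : ‖Q (x n)‖ ≤ ν * 1 := by
        have := Q.le_opNorm (x n)
        calc ‖Q (x n)‖ ≤ ‖Q‖ * ‖x n‖ := this
          _ ≤ ν * 1 := mul_le_mul_of_nonneg_left (hx1 n).le hνpos.le
      have h2 : 0 ≤ ‖Q (x n)‖ := norm_nonneg _
      nlinarith
    have hsx : ‖(ν : ℂ) • x n‖ ^ 2 ≤ ν ^ 2 := by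
      rw [norm_smul]
      have h1 : ‖(ν : ℂ)‖ = ν := by
        rw [Complex.norm_real, Real.norm_of_nonneg hνpos.le]
      rw [h1]
      have h2 : ‖x n‖ ^ 2 ≤ 1 := by nlinarith [norm_nonneg (x n), (hx1 n).le]
      calc (ν * ‖x n‖) ^ 2 = ν ^ 2 * ‖x n‖ ^ 2 := by ring
        _ ≤ ν ^ 2 * 1 := by nlinarith [sq_nonneg ν]
        _ = ν ^ 2 := mul_one _
    rw [hexp, hsm]
    nlinarith [hTx_sq_le n]
  have hdiff : Tendsto (fun n => Q (x n) - (ν : ℂ) • x n) atTop (𝓝 0) := by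
    rw [tendsto_zero_iff_norm_tendsto_zero]
    have hub : ∀ n, ‖Q (x n) - (ν : ℂ) • x n‖ ≤ Real.sqrt (2 * ν * (ν - ‖T (x n)‖ ^ 2)) := by
      intro n
      rw [← Real.sqrt_sq (norm_nonneg (Q (x n) - (ν : ℂ) • x n))]
      exact Real.sqrt_le_sqrt (hkey n)
    have hlim : Tendsto (fun n => Real.sqrt (2 * ν * (ν - ‖T (x n)‖ ^ 2))) atTop (𝓝 0) := by
      have h1 : Tendsto (fun n => 2 * ν * (ν - ‖T (x n)‖ ^ 2)) atTop (𝓝 (2 * ν * (ν - ν))) :=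
        (tendsto_const_nhds.mul (tendsto_const_nhds.sub htend2))
      have h2 : (2 : ℝ) * ν * (ν - ν) = 0 := by ring
      rw [h2] at h1
      simpa [Real.sqrt_zero] using h1.sqrt
    exact squeeze_zero (fun n => norm_nonneg _) hub hlim
  -- extract convergent subsequence
  obtain ⟨K, hK, hsub⟩ := hcomp.image_ball_subset_compact 1
  have hmem : ∀ n, Q (x n) ∈ K := fun n =>
    hsub ⟨x n, mem_ball_zero_iff.2 (hx1 n), rfl⟩
  obtain ⟨y, _, φ, hφ, hconv⟩ := hK.tendsto_subseq hmem
  have hν0 : (ν : ℂ) ≠ 0 := by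
    simpa using hνpos.ne'
  have hx : Tendsto (fun n => (ν : ℂ) • x (φ n)) atTop (𝓝 y) := by
    have h1 : Tendsto (fun n => Q (x (φ n)) - (Q (x (φ n)) - (ν : ℂ) • x (φ n))) atTop
        (𝓝 (y - 0)) := hconv.sub (hdiff.comp hφ.tendsto_atTop)
    simpa using h1
  set u : F := (ν : ℂ)⁻¹ • y with hu
  have hxu : Tendsto (fun n => x (φ n)) atTop (𝓝 u) := by
    have h1 := hx.const_smul ((ν : ℂ)⁻¹)
    refine h1.congr fun n => ?_
    rw [smul_smul, inv_mul_cancel₀ hν0, one_smul]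
  have hyu : y = (ν : ℂ) • u := by rw [hu, smul_inv_smul₀ hν0]
  have hQu : Q u = (ν : ℂ) • u := by
    have h1 : Tendsto (fun n => Q (x (φ n))) atTop (𝓝 (Q u)) :=
      (Q.continuous.tendsto u).comp hxu
    rw [← hyu]
    exact tendsto_nhds_unique h1 hconv
  have hu0 : u ≠ 0 := by
    have hlow : ∀ n, ‖T (x n)‖ / ‖T‖ ≤ ‖x n‖ := by
      intro n
      rw [div_le_iff₀ hTpos]
      calc ‖T (x n)‖ ≤ ‖T‖ * ‖x n‖ := T.le_opNorm _
        _ = ‖x n‖ * ‖T‖ := mul_comm _ _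
    have h1 : Tendsto (fun n => ‖T (x (φ n))‖ / ‖T‖) atTop (𝓝 1) := by
      have := (htend.comp hφ.tendsto_atTop).div_const ‖T‖
      rwa [div_self hTpos.ne'] at this
    have h2 : Tendsto (fun n => ‖x (φ n)‖) atTop (𝓝 ‖u‖) := hxu.norm
    have h3 : (1:ℝ) ≤ ‖u‖ := le_of_tendsto_of_tendsto' h1 h2 fun n => hlow (φ n)
    intro h
    rw [h, norm_zero] at h3
    linarith
  exact ⟨u, hu0, hQu⟩

end Stmt15Aux

open Filter

open scoped InnerProductSpace in
theorem stmt_15 (a : ℕ → lp (fun _ : ℕ => ℂ) 2)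
    (ha1 : Summable fun j : ℕ => ‖a j‖)
    (ha2 : Summable fun j : ℕ => ((j : ℝ) + 1) * ‖a j‖ ^ 2)
    (A : lp (fun _ : ℕ => ℂ) 2 →L[ℂ] lp (fun _ : ℕ × ℕ => ℂ) 2)
    (hA : ∀ (x : lp (fun _ : ℕ => ℂ) 2) (k p : ℕ),
      A x (k, p) = ∑' q : ℕ, a (p + q) k * x q)
    (AN : ℕ → (lp (fun _ : ℕ => ℂ) 2 →L[ℂ] lp (fun _ : ℕ × ℕ => ℂ) 2))
    (hAN : ∀ (N : ℕ) (x : lp (fun _ : ℕ => ℂ) 2) (k p : ℕ),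
      AN N x (k, p) = ∑ q ∈ Finset.range (N + 1 - p), a (p + q) k * x q) :
    IsSelfAdjoint (A ∘L ContinuousLinearMap.adjoint A) ∧
    IsCompactOperator (A ∘L ContinuousLinearMap.adjoint A) ∧
    (A ∘L ContinuousLinearMap.adjoint A).IsPositive ∧
    (∀ P : ℝ, 0 < P →
      IsGreatest
        {r : ℝ | ∃ g : lp (fun _ : ℕ × ℕ => ℂ) 2, ‖g‖ ^ 2 ≤ P ∧
          r = (A ∘L ContinuousLinearMap.adjoint A).reApplyInnerSelf g}
        (P * ‖A ∘L ContinuousLinearMap.adjoint A‖)) ∧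
    (A ∘L ContinuousLinearMap.adjoint A ≠ 0 →
      ∃ g : lp (fun _ : ℕ × ℕ => ℂ) 2, g ≠ 0 ∧
        (A ∘L ContinuousLinearMap.adjoint A) g
          = (‖A ∘L ContinuousLinearMap.adjoint A‖ : ℂ) • g) ∧
    Tendsto (fun N : ℕ => ‖AN N ∘L ContinuousLinearMap.adjoint (AN N)‖)
      atTop (nhds ‖A ∘L ContinuousLinearMap.adjoint A‖) := by
  classical
  haveI : Fact ((1 : ℝ≥0∞) ≤ 2) := ⟨one_le_two⟩
  -- compactness of the truncations
  have hANcomp : ∀ N, IsCompactOperator (AN N) := by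
    intro N
    set V : Submodule ℂ (lp (fun _ : ℕ × ℕ => ℂ) 2) := Submodule.span ℂ
      (Set.range fun q : Fin (N + 1) => AN N (lp.single 2 (q : ℕ) 1)) with hV
    haveI : FiniteDimensional ℂ V := FiniteDimensional.span_of_finite ℂ (Set.finite_range _)
    refine Stmt15Aux.isCompactOperator_of_mem_finiteDimensional (AN N) V ?_
    intro x
    have hsum : HasSum (fun q : ℕ => lp.single 2 q (x q)) x :=
      lp.hasSum_single (by norm_num) x
    have hsum2 : HasSum (fun q : ℕ => AN N (lp.single 2 q (x q))) (AN N x) :=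
      hsum.mapL (AN N)
    have hterm : ∀ q : ℕ, AN N (lp.single 2 q (x q)) ∈ V := by
      intro q
      by_cases hq : q ≤ N
      · have h1 : lp.single 2 q (x q) = (x q : ℂ) • (lp.single 2 q (1 : ℂ) : lp (fun _ : ℕ => ℂ) 2) := by
          rw [← lp.single_smul, smul_eq_mul, mul_one]
        rw [h1, map_smul]
        exact Submodule.smul_mem V _ (Submodule.subset_span ⟨⟨q, Nat.lt_succ_of_le hq⟩, rfl⟩)
      · have h0 : AN N (lp.single 2 q (x q)) = 0 := by
          apply lp.ext
          funext i
          obtain ⟨k, p⟩ := i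
          rw [hAN]
          have hz : ∀ q' ∈ Finset.range (N + 1 - p),
              a (p + q') k * (lp.single 2 q (x q) : ∀ _ : ℕ, ℂ) q' = 0 := by
            intro q' hq'
            rw [Finset.mem_range] at hq'
            have hne : q' ≠ q := by omega
            rw [lp.single_apply_ne 2 q _ hne, mul_zero]
          rw [Finset.sum_eq_zero hz]
          simp
        rw [h0]
        exact V.zero_mem
    have hclosed : IsClosed (V : Set (lp (fun _ : ℕ × ℕ => ℂ) 2)) :=
      V.closed_of_finiteDimensional
    exact hclosed.mem_of_tendsto hsum2
      (Filter.Eventually.of_forall fun s => Submodule.sum_mem V fun q _ => hterm q)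
  -- convergence in operator norm
  have hdist : Tendsto (fun N => ‖A - AN N‖) atTop (𝓝 0) := by
    have hb : Summable fun j : ℕ => ((j : ℝ) + 1) * ‖a j‖ ^ 2 := ha2
    have htail := Stmt15Aux.tendsto_tail _ hb (fun j => by positivity)
    have hsqrt : Tendsto (fun N => Real.sqrt
        (∑' j : ℕ, if N < j then ((j : ℝ) + 1) * ‖a j‖ ^ 2 else 0)) atTop (𝓝 0) := by
      simpa [Real.sqrt_zero] using htail.sqrt
    refine squeeze_zero (fun N => norm_nonneg _) (fun N => ?_) hsqrt
    exact Stmt15Aux.key_norm_bound a ha1 ha2 A hA (AN N) N (hAN N)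
  have hANtend : Tendsto AN atTop (𝓝 A) := by
    rw [tendsto_iff_norm_sub_tendsto_zero]
    exact hdist.congr fun N => by rw [norm_sub_rev]
  have hAcomp : IsCompactOperator A :=
    isCompactOperator_of_tendsto hANtend (Filter.Eventually.of_forall hANcomp)
  -- compactness of Q
  have hQcomp : IsCompactOperator (A ∘L ContinuousLinearMap.adjoint A) := by
    have := hAcomp.comp_clm (ContinuousLinearMap.adjoint A)
    rwa [← ContinuousLinearMap.coe_comp'] at this
  -- self-adjointness
  have hQsa : IsSelfAdjoint (A ∘L ContinuousLinearMap.adjoint A) := by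
    rw [ContinuousLinearMap.isSelfAdjoint_iff', ContinuousLinearMap.adjoint_comp,
      ContinuousLinearMap.adjoint_adjoint]
  -- inner product identity
  have hre : ∀ g : lp (fun _ : ℕ × ℕ => ℂ) 2,
      RCLike.re ⟪(A ∘L ContinuousLinearMap.adjoint A) g, g⟫_ℂ
        = ‖ContinuousLinearMap.adjoint A g‖ ^ 2 := by
    intro g
    have h1 : ⟪(A ∘L ContinuousLinearMap.adjoint A) g, g⟫_ℂ
        = ⟪ContinuousLinearMap.adjoint A g, ContinuousLinearMap.adjoint A g⟫_ℂ := by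
      calc ⟪(A ∘L ContinuousLinearMap.adjoint A) g, g⟫_ℂ
          = ⟪(ContinuousLinearMap.adjoint (ContinuousLinearMap.adjoint A))
              (ContinuousLinearMap.adjoint A g), g⟫_ℂ := by
            rw [ContinuousLinearMap.adjoint_adjoint]; rfl
        _ = _ := ContinuousLinearMap.adjoint_inner_left _ _ _
    rw [h1]
    exact inner_self_eq_norm_sq _
  -- positivity
  have hQpos : (A ∘L ContinuousLinearMap.adjoint A).IsPositive := by
    refine ⟨hQsa.isSymmetric, fun g => ?_⟩
    rw [ContinuousLinearMap.reApplyInnerSelf_apply, hre g]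
    positivity
  refine ⟨hQsa, hQcomp, hQpos, ?_, ?_, ?_⟩
  · -- IsGreatest
    intro P hP
    constructor
    · -- membership
      by_cases hQ0 : A ∘L ContinuousLinearMap.adjoint A = 0
      · refine ⟨0, by simpa using hP.le, ?_⟩
        rw [hQ0, ContinuousLinearMap.reApplyInnerSelf_apply]
        simp only [ContinuousLinearMap.zero_apply, inner_zero_left, map_zero, norm_zero,
          mul_zero]
      · have hA0 : A ≠ 0 := by
          intro h
          apply hQ0
          rw [h, ContinuousLinearMap.zero_comp]
        obtain ⟨g₀, hg₀, hg₀eig⟩ := Stmt15Aux.exists_eigenvector A hA0 hQcomp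
        set ν : ℝ := ‖A ∘L ContinuousLinearMap.adjoint A‖ with hν
        set c : ℝ := Real.sqrt P / ‖g₀‖ with hc
        have hg₀n : (0:ℝ) < ‖g₀‖ := lt_of_le_of_ne (norm_nonneg g₀) (fun h => hg₀ (norm_eq_zero.1 h.symm))
        refine ⟨(c : ℂ) • g₀, ?_, ?_⟩
        · have hn : ‖(c : ℂ) • g₀‖ = Real.sqrt P := by
            rw [norm_smul, Complex.norm_real, Real.norm_of_nonneg (by positivity),
              hc, div_mul_cancel₀ _ hg₀n.ne']
          rw [hn, Real.sq_sqrt hP.le]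
        · have hQg : (A ∘L ContinuousLinearMap.adjoint A) ((c : ℂ) • g₀)
              = (ν : ℂ) • ((c : ℂ) • g₀) := by
            rw [map_smul, hg₀eig, smul_comm]
          rw [ContinuousLinearMap.reApplyInnerSelf_apply, hQg, inner_smul_left,
            Complex.conj_ofReal]
          have hn : ‖(c : ℂ) • g₀‖ = Real.sqrt P := by
            rw [norm_smul, Complex.norm_real, Real.norm_of_nonneg (by positivity),
              hc, div_mul_cancel₀ _ hg₀n.ne']
          calc P * ν = ν * Real.sqrt P ^ 2 := by rw [Real.sq_sqrt hP.le]; ring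
            _ = ν * ‖(c : ℂ) • g₀‖ ^ 2 := by rw [hn]
            _ = ν * RCLike.re ⟪(c : ℂ) • g₀, (c : ℂ) • g₀⟫_ℂ := by
                rw [inner_self_eq_norm_sq]
            _ = RCLike.re ((ν : ℂ) * ⟪(c : ℂ) • g₀, (c : ℂ) • g₀⟫_ℂ) := by
                simp [RCLike.re_to_complex, Complex.re_ofReal_mul]
    · -- upper bound
      rintro r ⟨g, hg, rfl⟩
      have h1 : (A ∘L ContinuousLinearMap.adjoint A).reApplyInnerSelf g
          ≤ ‖A ∘L ContinuousLinearMap.adjoint A‖ * ‖g‖ ^ 2 := by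
        rw [ContinuousLinearMap.reApplyInnerSelf_apply]
        calc RCLike.re ⟪(A ∘L ContinuousLinearMap.adjoint A) g, g⟫_ℂ
            ≤ ‖⟪(A ∘L ContinuousLinearMap.adjoint A) g, g⟫_ℂ‖ := RCLike.re_le_norm _
          _ ≤ ‖(A ∘L ContinuousLinearMap.adjoint A) g‖ * ‖g‖ := norm_inner_le_norm _ _
          _ ≤ (‖A ∘L ContinuousLinearMap.adjoint A‖ * ‖g‖) * ‖g‖ := by
              gcongr
              exact (A ∘L ContinuousLinearMap.adjoint A).le_opNorm g
          _ = ‖A ∘L ContinuousLinearMap.adjoint A‖ * ‖g‖ ^ 2 := by ring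
      calc (A ∘L ContinuousLinearMap.adjoint A).reApplyInnerSelf g
          ≤ ‖A ∘L ContinuousLinearMap.adjoint A‖ * ‖g‖ ^ 2 := h1
        _ ≤ ‖A ∘L ContinuousLinearMap.adjoint A‖ * P := by gcongr
        _ = P * ‖A ∘L ContinuousLinearMap.adjoint A‖ := mul_comm _ _
  · -- eigenvector
    intro hQ0
    have hA0 : A ≠ 0 := by
      intro h
      apply hQ0
      rw [h, ContinuousLinearMap.zero_comp]
    exact Stmt15Aux.exists_eigenvector A hA0 hQcomp
  · -- limit of norms
    have h6 : Tendsto (fun N => ‖AN N‖ * ‖AN N‖) atTop (𝓝 (‖A‖ * ‖A‖)) :=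
      hANtend.norm.mul hANtend.norm
    rw [show ‖A ∘L ContinuousLinearMap.adjoint A‖ = ‖A‖ * ‖A‖ from Stmt15Aux.normQ_eq A]
    exact h6.congr fun N => (Stmt15Aux.normQ_eq (AN N)).symm
end
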